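/- arXiv:math/0311418 — 3 statements merged into one kernel-verified Lean document; each statement's English description precedes it below -/
import Mathlib

section
/- Let F(λ, π) ∈ ℚ be defined for strict partitions λ of n and partitions π of n with all parts odd by the Morris recurrence: F(∅, ∅) = 1, and for n > 0, taking r to be the largest part of π and π′ the partition obtained by removing one copy of r from π, F(λ, π) = Σ_{i ∈ I(λ,r)} n_i · F(λ(i,r), π′), where n_i = (−1)^{j−i} 2^{1−ε(λ)} if i ∈ I_+, n_i = (−1)^{l−i} if i ∈ I_0, and n_i = (−1)^{j−i+λ_i} 2^{1−ε(λ)} if i ∈ I_− (with F(λ,π) = 0 when I(λ,r) is empty). Then F(λ, π) = 0 whenever ℓ(π) < srank(λ), where srank(λ) = max(o, e + (ℓ(λ) mod 2)) with o and e the numbers of odd and even parts of λ. -/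
set_option maxHeartbeats 2000000

def IsStrictPartition (n : ℕ) (l : List ℕ) : Prop :=
  l.Pairwise (· > ·) ∧ (∀ x ∈ l, 0 < x) ∧ l.sum = n

def partAt (l : List ℕ) (i : ℕ) : ℕ := l.getD (i - 1) 0

def eps (l : List ℕ) : ℕ := (l.countP (fun x => decide (Even x))) % 2

def morrisSum (F : List ℕ → List ℕ → ℚ) (l : List ℕ) (r : ℕ) (π' : List ℕ) : ℚ :=
  (∑ i ∈ Finset.Icc 1 l.length, ∑ j ∈ Finset.Icc 1 l.length,
      if partAt l (j + 1) < partAt l i - r ∧ partAt l i - r < partAt l j then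
        (-1 : ℚ) ^ (j - i) * (2 : ℚ) ^ (1 - eps l) *
          F ((l.eraseIdx (i - 1)).insertIdx (j - 1) (partAt l i - r)) π'
      else 0)
  + (∑ i ∈ Finset.Icc 1 l.length,
      if partAt l i = r then (-1 : ℚ) ^ (l.length - i) * F (l.eraseIdx (i - 1)) π' else 0)
  + (∑ i ∈ Finset.Icc 1 l.length, ∑ j ∈ Finset.Icc 1 l.length,
      if i < j ∧ partAt l i + partAt l j = r then
        (-1 : ℚ) ^ (j - i + partAt l i) * (2 : ℚ) ^ (1 - eps l) *
          F ((l.eraseIdx (j - 1)).eraseIdx (i - 1)) π'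
      else 0)

private lemma insertIdx_eq_take_cons_drop' {α : Type*} (v : α) :
    ∀ (q : ℕ) (L : List α), q ≤ L.length →
      L.insertIdx q v = L.take q ++ v :: L.drop q
  | 0, L, _ => by simp
  | q+1, [], h => by simp at h
  | q+1, x :: L, h => by
    simp only [List.insertIdx_succ_cons, List.take_succ_cons, List.drop_succ_cons,
      List.cons_append]
    rw [insertIdx_eq_take_cons_drop' v q L (by simpa using h)]

private lemma erase_sum (l : List ℕ) (k : ℕ) (h : k < l.length) :
    (l.eraseIdx k).sum + l[k] = l.sum := by
  conv_rhs => rw [← List.take_append_drop k l, List.drop_eq_getElem_cons h]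
  rw [List.eraseIdx_eq_take_drop_succ, List.sum_append, List.sum_append, List.sum_cons]
  omega

private lemma erase_countP (p : ℕ → Bool) (l : List ℕ) (k : ℕ) (h : k < l.length) :
    (l.eraseIdx k).countP p + (if p l[k] then 1 else 0) = l.countP p := by
  conv_rhs => rw [← List.take_append_drop k l, List.drop_eq_getElem_cons h]
  rw [List.eraseIdx_eq_take_drop_succ, List.countP_append, List.countP_append, List.countP_cons]
  omega

private lemma insert_sum (L : List ℕ) (q : ℕ) (h : q ≤ L.length) (v : ℕ) :
    (L.insertIdx q v).sum = L.sum + v := by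
  rw [insertIdx_eq_take_cons_drop' v q L h]
  conv_rhs => rw [← List.take_append_drop q L]
  rw [List.sum_append, List.sum_append, List.sum_cons]
  omega

private lemma insert_countP (p : ℕ → Bool) (L : List ℕ) (q : ℕ) (h : q ≤ L.length) (v : ℕ) :
    (L.insertIdx q v).countP p = L.countP p + (if p v then 1 else 0) := by
  rw [insertIdx_eq_take_cons_drop' v q L h]
  conv_rhs => rw [← List.take_append_drop q L]
  rw [List.countP_append, List.countP_append, List.countP_cons]
  omega

private lemma insert_mem {L : List ℕ} {q v x : ℕ} (h : q ≤ L.length)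
    (hx : x ∈ L.insertIdx q v) : x = v ∨ x ∈ L := by
  rw [insertIdx_eq_take_cons_drop' v q L h, List.mem_append, List.mem_cons] at hx
  rcases hx with hx | hx | hx
  · exact Or.inr ((List.take_sublist q L).subset hx)
  · exact Or.inl hx
  · exact Or.inr ((List.drop_sublist q L).subset hx)

private lemma count_split (X : List ℕ) :
    X.countP (fun x => decide (Odd x)) + X.countP (fun x => decide (Even x)) = X.length := by
  induction X with
  | nil => simp
  | cons a t ih =>
    rcases Nat.even_or_odd a with h | h <;>
      simp [List.countP_cons, h, Nat.not_odd_iff_even.mpr, Nat.not_even_iff_odd.mpr] <;> omega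

private lemma sorted_le {l : List ℕ} (hs : l.Pairwise (· > ·)) {p q : ℕ} (hpq : p ≤ q)
    (hq : q < l.length) : l[q] ≤ l[p]'(by omega) := by
  rcases Nat.lt_or_ge p q with h | h
  · exact le_of_lt (List.pairwise_iff_getElem.mp hs p q (by omega) hq h)
  · have : p = q := by omega
    subst this; exact le_refl _

private lemma insert_sorted {L : List ℕ} (hs : L.Pairwise (· > ·)) {q v : ℕ}
    (hq : q ≤ L.length)
    (hlow : ∀ (h : q < L.length), L[q] < v)
    (hhigh : ∀ (h0 : 0 < q), v < L[q-1]'(by omega)) :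
    (L.insertIdx q v).Pairwise (· > ·) := by
  rw [insertIdx_eq_take_cons_drop' v q L hq]
  have hbelow : ∀ b ∈ L.drop q, v > b := by
    intro b hb
    obtain ⟨k, hk, rfl⟩ := List.mem_iff_getElem.mp hb
    rw [List.getElem_drop]
    have hqlen : q + k < L.length := by rw [List.length_drop] at hk; omega
    calc L[q + k] ≤ L[q]'(by omega) := sorted_le hs (by omega) hqlen
    _ < v := hlow (by omega)
  have habove : ∀ a ∈ L.take q, a > v := by
    intro a ha
    obtain ⟨k, hk, rfl⟩ := List.mem_iff_getElem.mp ha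
    rw [List.getElem_take]
    have hkq : k < q := by rw [List.length_take] at hk; omega
    have hk' : k < L.length := by rw [List.length_take] at hk; omega
    calc v < L[q-1]'(by omega) := hhigh (by omega)
    _ ≤ L[k] := sorted_le hs (by omega) (by omega)
  rw [List.pairwise_append]
  refine ⟨hs.sublist (List.take_sublist q L), ?_, ?_⟩
  · rw [List.pairwise_cons]
    exact ⟨hbelow, hs.sublist (List.drop_sublist q L)⟩
  · intro a ha b hb
    rcases List.mem_cons.mp hb with rfl | hb
    · exact habove a ha
    · exact lt_trans (hbelow b hb) (habove a ha)

private lemma getElem_idx_congr {l : List ℕ} {a b : ℕ} (h : a = b) (ha : a < l.length) :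
    l[a] = l[b]'(h ▸ ha) := by subst h; rfl

/-- If `F` satisfies the Morris recurrence (with `r` the largest part of `π`, i.e. its head),
then `F(λ, π) = 0` whenever `ℓ(π) < srank(λ) = max(o, e + (ℓ(λ) mod 2))`. -/
theorem morris_recurrence_vanishing (F : List ℕ → List ℕ → ℚ)
    (hbase : F [] [] = 1)
    (hrec : ∀ (n : ℕ) (l : List ℕ) (r : ℕ) (π' : List ℕ),
      0 < n → IsStrictPartition n l →
      (r :: π').Pairwise (· ≥ ·) → (∀ x ∈ r :: π', Odd x) → (r :: π').sum = n →
      F l (r :: π') = morrisSum F l r π') :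
    ∀ (n : ℕ) (l π : List ℕ), IsStrictPartition n l →
      π.Pairwise (· ≥ ·) → (∀ x ∈ π, Odd x) → π.sum = n →
      π.length < max (l.countP (fun x => decide (Odd x)))
          (l.countP (fun x => decide (Even x)) + l.length % 2) →
      F l π = 0 := by
  intro n l π
  induction π generalizing n l with
  | nil =>
    intro hl _ _ hsum hlt
    exfalso
    obtain ⟨hsort, hpos, hlsum⟩ := hl
    cases l with
    | nil => simp at hlt
    | cons a t =>
      have ha := hpos a List.mem_cons_self
      simp only [List.sum_nil] at hsum
      simp only [List.sum_cons] at hlsum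
      omega
  | cons r π' ih =>
    intro hl hsort hodd hsum hlt
    have hrodd : Odd r := hodd r List.mem_cons_self
    have hr2 : r % 2 = 1 := Nat.odd_iff.mp hrodd
    have hn : 0 < n := by
      obtain ⟨_, hpos, hlsum⟩ := hl
      cases l with
      | nil => simp at hlt
      | cons a t =>
        have := hpos a List.mem_cons_self
        simp only [List.sum_cons] at hlsum
        omega
    rw [hrec n l r π' hn hl hsort hodd hsum]
    have hsort' : π'.Pairwise (· ≥ ·) := (List.pairwise_cons.mp hsort).2
    have hodd' : ∀ x ∈ π', Odd x := fun x hx => hodd x (List.mem_cons_of_mem r hx)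
    have hsum' : r + π'.sum = n := by simpa using hsum
    have hcs := count_split l
    simp only [List.length_cons] at hlt
    have hlsum : l.sum = n := hl.2.2
    have key : ∀ (A B C : ℚ), A = 0 → B = 0 → C = 0 → A + B + C = 0 := by
      rintro _ _ _ rfl rfl rfl; ring
    rw [morrisSum]
    refine key _ _ _
      (Finset.sum_eq_zero fun i hi => Finset.sum_eq_zero fun j hj => ?_)
      (Finset.sum_eq_zero fun i hi => ?_)
      (Finset.sum_eq_zero fun i hi => Finset.sum_eq_zero fun j hj => ?_)
    -- Case I₊
    · rw [Finset.mem_Icc] at hi hj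
      split_ifs with hc
      swap
      · rfl
      have hik : i - 1 < l.length := by omega
      have hjk : j - 1 < l.length := by omega
      have hpi : partAt l i = l[i-1]'hik := List.getD_eq_getElem l 0 hik
      have hpj : partAt l j = l[j-1]'hjk := List.getD_eq_getElem l 0 hjk
      rw [hpi, hpj] at hc
      rw [hpi]
      have hv1 : 1 ≤ l[i-1]'hik - r := by
        have := hc.1; omega
      have hcv : ∀ (hjl : j < l.length), l[j] < l[i-1]'hik - r := by
        intro hjl
        have h1 : partAt l (j+1) = l[j]'hjl := by
          rw [partAt, Nat.add_sub_cancel]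
          exact List.getD_eq_getElem l 0 hjl
        have h2 := hc.1
        rw [h1] at h2
        exact h2
      have hij : i ≤ j := by
        by_contra hcon
        push_neg at hcon
        have hjlt : j < l.length := by omega
        have h2 : l[i-1]'hik ≤ l[j]'hjlt := sorted_le hl.1 (by omega) hik
        have h3 := hcv hjlt
        omega
      have hsub := List.eraseIdx_sublist l (i-1)
      have hml : (l.eraseIdx (i-1)).length = l.length - 1 := by
        rw [List.length_eraseIdx, if_pos hik]
      have hq : j - 1 ≤ (l.eraseIdx (i-1)).length := by omega
      have hmsort : (l.eraseIdx (i-1)).Pairwise (· > ·) := hl.1.sublist hsub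
      have hlow : ∀ (h : j - 1 < (l.eraseIdx (i-1)).length),
          (l.eraseIdx (i-1))[j-1] < l[i-1]'hik - r := by
        intro h
        have hjlt : j < l.length := by omega
        have e1 : (l.eraseIdx (i-1))[j-1]'h = l[j]'hjlt := by
          rw [List.getElem_eraseIdx, dif_neg (by omega)]
          have hjj : j - 1 + 1 = j := by omega
          have hb : j - 1 + 1 < l.length := by omega
          exact getElem_idx_congr hjj hb
        have h3 := hcv hjlt
        omega
      have hhigh : ∀ (h0 : 0 < j - 1),
          l[i-1]'hik - r < (l.eraseIdx (i-1))[j-1-1]'(by omega) := by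
        intro h0
        have h5 := hc.2
        rcases Nat.lt_or_ge (j-1-1) (i-1) with hcase | hcase
        · have e2 : (l.eraseIdx (i-1))[j-1-1]'(by omega) = l[j-1-1]'(by omega) := by
            rw [List.getElem_eraseIdx, dif_pos hcase]
          have h4 : l[j-1]'hjk ≤ l[j-1-1]'(by omega) := sorted_le hl.1 (by omega) hjk
          omega
        · have hjj : j - 1 - 1 + 1 = j - 1 := by omega
          have hb : j - 1 - 1 + 1 < l.length := by omega
          have e2 : (l.eraseIdx (i-1))[j-1-1]'(by omega) = l[j-1]'hjk := by
            rw [List.getElem_eraseIdx, dif_neg (by omega)]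
            exact getElem_idx_congr hjj hb
          omega
      have hsorted' : ((l.eraseIdx (i-1)).insertIdx (j-1) (l[i-1]'hik - r)).Pairwise (· > ·) :=
        insert_sorted hmsort hq hlow hhigh
      have hpos' : ∀ x ∈ (l.eraseIdx (i-1)).insertIdx (j-1) (l[i-1]'hik - r), 0 < x := by
        intro x hx
        rcases insert_mem hq hx with rfl | hx
        · omega
        · exact hl.2.1 x (hsub.subset hx)
      have hesum := erase_sum l (i-1) hik
      have hisum := insert_sum (l.eraseIdx (i-1)) (j-1) hq (l[i-1]'hik - r)
      have hsum'' : ((l.eraseIdx (i-1)).insertIdx (j-1) (l[i-1]'hik - r)).sum = π'.sum := by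
        omega
      have hlen' : ((l.eraseIdx (i-1)).insertIdx (j-1) (l[i-1]'hik - r)).length = l.length := by
        rw [List.length_insertIdx, if_pos hq]
        omega
      have cO1 := erase_countP (fun x => decide (Odd x)) l (i-1) hik
      have cO2 := insert_countP (fun x => decide (Odd x)) (l.eraseIdx (i-1)) (j-1) hq
        (l[i-1]'hik - r)
      have hOrel : ((l.eraseIdx (i-1)).insertIdx (j-1) (l[i-1]'hik - r)).countP
            (fun x => decide (Odd x)) + 1 = l.countP (fun x => decide (Odd x)) ∨
          ((l.eraseIdx (i-1)).insertIdx (j-1) (l[i-1]'hik - r)).countP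
            (fun x => decide (Odd x)) = l.countP (fun x => decide (Odd x)) + 1 := by
        rcases Nat.even_or_odd (l[i-1]'hik) with hpar | hpar
        · right
          have hvo : Odd (l[i-1]'hik - r) := by
            rw [Nat.odd_iff]
            rw [Nat.even_iff] at hpar
            omega
          rw [if_neg (show ¬ ((fun x => decide (Odd x)) (l[i-1]'hik) = true) by
            simp [Nat.not_odd_iff_even.mpr hpar])] at cO1
          rw [if_pos (show (fun x => decide (Odd x)) (l[i-1]'hik - r) = true by
            simp [hvo])] at cO2
          omega
        · left
          have hvo : ¬ Odd (l[i-1]'hik - r) := by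
            rw [Nat.not_odd_iff_even, Nat.even_iff]
            rw [Nat.odd_iff] at hpar
            omega
          rw [if_pos (show (fun x => decide (Odd x)) (l[i-1]'hik) = true by
            simp [hpar])] at cO1
          rw [if_neg (show ¬ ((fun x => decide (Odd x)) (l[i-1]'hik - r) = true) by
            simp [hvo])] at cO2
          omega
      have hcs' := count_split ((l.eraseIdx (i-1)).insertIdx (j-1) (l[i-1]'hik - r))
      have hlen'' : π'.length <
          max (((l.eraseIdx (i-1)).insertIdx (j-1) (l[i-1]'hik - r)).countP
              (fun x => decide (Odd x)))
            (((l.eraseIdx (i-1)).insertIdx (j-1) (l[i-1]'hik - r)).countP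
              (fun x => decide (Even x)) +
              ((l.eraseIdx (i-1)).insertIdx (j-1) (l[i-1]'hik - r)).length % 2) := by
        omega
      rw [ih π'.sum _ ⟨hsorted', hpos', hsum''⟩ hsort' hodd' rfl hlen'', mul_zero]
    -- Case I₀
    · rw [Finset.mem_Icc] at hi
      split_ifs with hc
      swap
      · rfl
      have hik : i - 1 < l.length := by omega
      rw [partAt, List.getD_eq_getElem l 0 hik] at hc
      have hsub := List.eraseIdx_sublist l (i-1)
      have hsorted' : (l.eraseIdx (i-1)).Pairwise (· > ·) := hl.1.sublist hsub
      have hpos' : ∀ x ∈ l.eraseIdx (i-1), 0 < x := fun x hx => hl.2.1 x (hsub.subset hx)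
      have hesum := erase_sum l (i-1) hik
      rw [hc] at hesum
      have hsum'' : (l.eraseIdx (i-1)).sum = π'.sum := by omega
      have hlen' : (l.eraseIdx (i-1)).length = l.length - 1 := by
        rw [List.length_eraseIdx, if_pos hik]
      have cO1 := erase_countP (fun x => decide (Odd x)) l (i-1) hik
      rw [hc, if_pos (show (fun x => decide (Odd x)) r = true by simp [hrodd])] at cO1
      have hcs' := count_split (l.eraseIdx (i-1))
      have hlen'' : π'.length < max ((l.eraseIdx (i-1)).countP (fun x => decide (Odd x)))
          ((l.eraseIdx (i-1)).countP (fun x => decide (Even x)) +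
            (l.eraseIdx (i-1)).length % 2) := by
        omega
      rw [ih π'.sum _ ⟨hsorted', hpos', hsum''⟩ hsort' hodd' rfl hlen'', mul_zero]
    -- Case I₋
    · rw [Finset.mem_Icc] at hi hj
      split_ifs with hc
      swap
      · rfl
      have hik : i - 1 < l.length := by omega
      have hjk : j - 1 < l.length := by omega
      have hpi : partAt l i = l[i-1]'hik := List.getD_eq_getElem l 0 hik
      have hpj : partAt l j = l[j-1]'hjk := List.getD_eq_getElem l 0 hjk
      rw [hpi, hpj] at hc
      obtain ⟨hclt, hcsum⟩ := hc
      have hmsub := List.eraseIdx_sublist l (j-1)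
      have hml : (l.eraseIdx (j-1)).length = l.length - 1 := by
        rw [List.length_eraseIdx, if_pos hjk]
      have hikm : i - 1 < (l.eraseIdx (j-1)).length := by omega
      have hm_i : (l.eraseIdx (j-1))[i-1]'hikm = l[i-1]'hik := by
        rw [List.getElem_eraseIdx, dif_pos (by omega)]
      have hsub2 := List.eraseIdx_sublist (l.eraseIdx (j-1)) (i-1)
      have hsorted' : ((l.eraseIdx (j-1)).eraseIdx (i-1)).Pairwise (· > ·) :=
        hl.1.sublist (hsub2.trans hmsub)
      have hpos' : ∀ x ∈ (l.eraseIdx (j-1)).eraseIdx (i-1), 0 < x :=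
        fun x hx => hl.2.1 x (hmsub.subset (hsub2.subset hx))
      have hesum1 := erase_sum l (j-1) hjk
      have hesum2 := erase_sum (l.eraseIdx (j-1)) (i-1) hikm
      rw [hm_i] at hesum2
      have hsum'' : ((l.eraseIdx (j-1)).eraseIdx (i-1)).sum = π'.sum := by omega
      have hlen' : ((l.eraseIdx (j-1)).eraseIdx (i-1)).length = l.length - 2 := by
        rw [List.length_eraseIdx, if_pos hikm]
        omega
      have cO1 := erase_countP (fun x => decide (Odd x)) l (j-1) hjk
      have cO2 := erase_countP (fun x => decide (Odd x)) (l.eraseIdx (j-1)) (i-1) hikm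
      rw [hm_i] at cO2
      have hOrel : ((l.eraseIdx (j-1)).eraseIdx (i-1)).countP (fun x => decide (Odd x)) + 1
          = l.countP (fun x => decide (Odd x)) := by
        rcases Nat.even_or_odd (l[i-1]'hik) with hpar | hpar
        · have hjodd : Odd (l[j-1]'hjk) := by
            rw [Nat.odd_iff]
            rw [Nat.even_iff] at hpar
            omega
          rw [if_pos (show (fun x => decide (Odd x)) (l[j-1]'hjk) = true by
            simp [hjodd])] at cO1
          rw [if_neg (show ¬ ((fun x => decide (Odd x)) (l[i-1]'hik) = true) by
            simp [Nat.not_odd_iff_even.mpr hpar])] at cO2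
          omega
        · have hjeven : ¬ Odd (l[j-1]'hjk) := by
            rw [Nat.not_odd_iff_even, Nat.even_iff]
            rw [Nat.odd_iff] at hpar
            omega
          rw [if_neg (show ¬ ((fun x => decide (Odd x)) (l[j-1]'hjk) = true) by
            simp [hjeven])] at cO1
          rw [if_pos (show (fun x => decide (Odd x)) (l[i-1]'hik) = true by
            simp [hpar])] at cO2
          omega
      have hcs' := count_split ((l.eraseIdx (j-1)).eraseIdx (i-1))
      have hlen'' : π'.length <
          max (((l.eraseIdx (j-1)).eraseIdx (i-1)).countP (fun x => decide (Odd x)))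
            (((l.eraseIdx (j-1)).eraseIdx (i-1)).countP (fun x => decide (Even x)) +
              ((l.eraseIdx (j-1)).eraseIdx (i-1)).length % 2) := by
        omega
      rw [ih π'.sum _ ⟨hsorted', hpos', hsum''⟩ hsort' hodd' rfl hlen'', mul_zero]
end

section
/- Let λ be a strict partition of n, and write Schur's Q-function Q_λ in the basis of power sum symmetric functions: Q_λ = Σ_π c_π p_π, where the sum is over partitions π of n and p_π = p_{π_1} p_{π_2} ⋯. Then every π with c_π ≠ 0 satisfies ℓ(π) ≥ srank(λ), where srank(λ) = max(o, e + (ℓ(λ) mod 2)) with o and e the numbers of odd and even parts of λ. Equivalently, assigning deg(p_i) = 1, the terms of lowest degree in Q_λ have degree at least srank(λ). -/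
open scoped Classical

/-- The monomial symmetric function `m_μ`, as a formal power series in the variables
`x_0, x_1, x_2, …`: the coefficient of a monomial is `1` exactly when the multiset of its
nonzero exponents is `μ`. -/
noncomputable def mSym (μ : Multiset ℕ) : MvPowerSeries ℕ ℚ :=
  fun d => if d.support.val.map d = μ then 1 else 0

/-- The power sum symmetric function `p_k = Σ_i x_i^k`. -/
noncomputable def pFun (k : ℕ) : MvPowerSeries ℕ ℚ :=
  fun d => if ∃ i : ℕ, d = Finsupp.single i k then 1 else 0

/-- `q_k = Σ_{μ ⊢ k} 2^{ℓ(μ)} m_μ`. -/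
noncomputable def qFun (k : ℕ) : MvPowerSeries ℕ ℚ :=
  ∑ μ : Nat.Partition k,
    MvPowerSeries.C (σ := ℕ) (R := ℚ) ((2 : ℚ) ^ (Multiset.card μ.parts)) * mSym μ.parts

/-- `p_π = p_{π_1} p_{π_2} ⋯` for a partition `π` of `n`. -/
noncomputable def pProd {n : ℕ} (π : Nat.Partition n) : MvPowerSeries ℕ ℚ :=
  (π.parts.map pFun).prod

namespace QW

/-- weight of an exponent finsupp -/
def wt (d : ℕ →₀ ℕ) : ℕ := d.sum fun _ v => v

lemma coeff_apply (f : MvPowerSeries ℕ ℚ) (d : ℕ →₀ ℕ) :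
    MvPowerSeries.coeff (R := ℚ) d f = f d := rfl

lemma wt_add (a b : ℕ →₀ ℕ) : wt (a + b) = wt a + wt b :=
  Finsupp.sum_add_index' (fun _ => rfl) (fun _ _ _ => rfl)

lemma wt_single (i k : ℕ) : wt (Finsupp.single i k) = k :=
  Finsupp.sum_single_index rfl

lemma wt_eq_sum (d : ℕ →₀ ℕ) : wt d = ∑ i ∈ d.support, d i := rfl

lemma apply_le_wt (d : ℕ →₀ ℕ) (i : ℕ) : d i ≤ wt d := by
  by_cases h : i ∈ d.support
  · exact wt_eq_sum d ▸ Finset.single_le_sum (fun _ _ => Nat.zero_le _) h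
  · simp [Finsupp.notMem_support_iff.mp h]

lemma sub_single_add (d : ℕ →₀ ℕ) (i k : ℕ) (h : k ≤ d i) :
    (d - Finsupp.single i k) + Finsupp.single i k = d := by
  have : Finsupp.single i k ≤ d := Finsupp.single_le_iff.mpr h
  exact tsub_add_cancel_of_le this

lemma wt_sub_single (d : ℕ →₀ ℕ) (i k : ℕ) (h : k ≤ d i) :
    wt (d - Finsupp.single i k) = wt d - k := by
  have h2 := congrArg wt (sub_single_add d i k h)
  rw [wt_add, wt_single] at h2
  omega

lemma sub_single_apply (d : ℕ →₀ ℕ) (i k a : ℕ) :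
    (d - Finsupp.single i k) a = d a - (if a = i then k else 0) := by
  rw [Finsupp.tsub_apply, Finsupp.single_apply]
  by_cases h : a = i <;> simp [eq_comm, h]

lemma support_sub_single (d : ℕ →₀ ℕ) (i k : ℕ) (hk : 0 < k) (h : k ≤ d i) :
    (d - Finsupp.single i k).support
      = if d i = k then d.support.erase i else d.support := by
  ext a
  rw [Finsupp.mem_support_iff, sub_single_apply]
  by_cases hdi : d i = k <;> simp only [hdi, if_true, if_false]
  · rw [Finset.mem_erase, Finsupp.mem_support_iff]
    by_cases ha : a = i <;> simp [ha, hdi] <;> omega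
  · rw [Finsupp.mem_support_iff]
    by_cases ha : a = i <;> simp [ha] <;> omega

lemma card_support_sub_single (d : ℕ →₀ ℕ) (i k : ℕ) (hk : 0 < k) (hi : i ∈ d.support)
    (h : k ≤ d i) :
    (d - Finsupp.single i k).support.card
      = d.support.card - (if d i = k then 1 else 0) := by
  rw [support_sub_single d i k hk h]
  by_cases hdi : d i = k <;> simp [hdi, Finset.card_erase_of_mem hi]

/-- closed formula for the coefficients of `qFun`. -/
lemma qFun_coeff (k : ℕ) (d : ℕ →₀ ℕ) :
    qFun k d = if wt d = k then (2 : ℚ) ^ d.support.card else 0 := by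
  have : qFun k d = ∑ μ : Nat.Partition k,
      (2 : ℚ) ^ (Multiset.card μ.parts) * (if d.support.val.map d = μ.parts then 1 else 0) := by
    show MvPowerSeries.coeff (R := ℚ) d (qFun k) = _
    rw [qFun, map_sum]
    refine Finset.sum_congr rfl fun μ _ => ?_
    rw [MvPowerSeries.coeff_C_mul]; rfl
  rw [this]
  by_cases h : wt d = k
  · have hpos : ∀ x ∈ d.support.val.map d, 0 < x := by
      intro x hx
      obtain ⟨i, hi, rfl⟩ := Multiset.mem_map.mp hx
      exact Nat.pos_of_ne_zero (Finsupp.mem_support_iff.mp hi)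
    have hsum : (d.support.val.map d).sum = k := by
      rw [← h, wt_eq_sum]; rfl
    set μ₀ : Nat.Partition k := ⟨d.support.val.map d, fun {x} hx => hpos x hx, hsum⟩ with hμ₀
    rw [Finset.sum_eq_single μ₀]
    · rw [if_pos h, if_pos rfl, mul_one]
      congr 1
      exact Multiset.card_map _ _
    · intro μ _ hne
      rw [if_neg, mul_zero]
      intro heq
      exact hne (Nat.Partition.ext (show μ.parts = μ₀.parts from heq.symm))
    · intro hμ; exact absurd (Finset.mem_univ μ₀) hμ
  · rw [Finset.sum_eq_zero, if_neg h]
    intro μ _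
    rw [if_neg, mul_zero]
    intro heq
    apply h
    rw [wt_eq_sum]
    have := μ.parts_sum
    rw [← heq] at this
    rw [← this]; rfl

/-- workhorse for products with a power sum. -/
lemma pFun_mul_coeff (k : ℕ) (hk : 0 < k) (g : MvPowerSeries ℕ ℚ) (d : ℕ →₀ ℕ) :
    (pFun k * g) d = ∑ i ∈ d.support.filter (fun i => k ≤ d i),
      g (d - Finsupp.single i k) := by
  show MvPowerSeries.coeff (R := ℚ) d (pFun k * g) = _
  rw [MvPowerSeries.coeff_mul]
  have step1 : ∀ p : (ℕ →₀ ℕ) × (ℕ →₀ ℕ),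
      MvPowerSeries.coeff (R := ℚ) p.1 (pFun k) * MvPowerSeries.coeff (R := ℚ) p.2 g
        = if (∃ i, p.1 = Finsupp.single i k) then MvPowerSeries.coeff (R := ℚ) p.2 g else 0 := by
    intro p
    rw [coeff_apply, pFun]
    by_cases h : ∃ i, p.1 = Finsupp.single i k <;> simp [h]
  rw [Finset.sum_congr rfl (fun p _ => step1 p), Finset.sum_ite, Finset.sum_const_zero,
    add_zero]
  have hset : (Finset.HasAntidiagonal.antidiagonal d).filter (fun p => ∃ i, p.1 = Finsupp.single i k)
      = (d.support.filter (fun i => k ≤ d i)).image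
          (fun i => (Finsupp.single i k, d - Finsupp.single i k)) := by
    ext p
    obtain ⟨p1, p2⟩ := p
    simp only [Finset.mem_filter, Finset.mem_image, Finset.HasAntidiagonal.mem_antidiagonal]
    constructor
    · rintro ⟨hadd, i, rfl⟩
      have hle : k ≤ d i := by
        have := congrArg (fun f : ℕ →₀ ℕ => f i) hadd
        simp only [Finsupp.add_apply, Finsupp.single_eq_same] at this
        omega
      refine ⟨i, ⟨Finsupp.mem_support_iff.mpr (by omega), hle⟩, ?_⟩
      have hp2 : p2 = d - Finsupp.single i k := by
        rw [← hadd]; exact (add_tsub_cancel_left _ p2).symm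
      rw [hp2]
    · rintro ⟨i, hi, heq⟩
      obtain ⟨hmem, hle⟩ := hi
      obtain ⟨h1, h2⟩ := Prod.mk.injEq .. ▸ heq
      constructor
      · rw [← h1, ← h2, add_comm]
        exact sub_single_add d i k hle
      · exact ⟨i, h1.symm⟩
  have hinj : ∀ x ∈ d.support.filter (fun i => k ≤ d i),
      ∀ y ∈ d.support.filter (fun i => k ≤ d i),
      (fun i => (Finsupp.single i k, d - Finsupp.single i k)) x
        = (fun i => (Finsupp.single i k, d - Finsupp.single i k)) y → x = y := by
    intro x _ y _ hxy
    have := congrArg Prod.fst hxy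
    simp only at this
    exact Finsupp.single_left_injective hk.ne' this
  rw [hset, Finset.sum_image hinj]
  exact Finset.sum_congr rfl fun i _ => rfl

lemma card_odd_Icc (m : ℕ) : ((Finset.Icc 1 m).filter (fun j => Odd j)).card = (m+1)/2 := by
  induction m with
  | zero => simp
  | succ m ih =>
    rw [← Finset.insert_Icc_right_eq_Icc_add_one (by omega), Finset.filter_insert]
    by_cases h : Odd (m+1)
    · rw [if_pos h, Finset.card_insert_of_notMem (by simp), ih]
      rw [Nat.odd_iff] at h; omega
    · rw [if_neg h, ih]
      rw [Nat.odd_iff] at h; omega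

lemma inner_sum (m s : ℕ) (hs : 1 ≤ s) :
    ∑ j ∈ (Finset.Icc 1 m).filter (fun j => Odd j), (2:ℚ)^(s - if m = j then 1 else 0)
      = 2^(s-1) * (m : ℚ) := by
  have hsplit : ∀ j, (2:ℚ)^(s - if m = j then 1 else 0)
      = 2^s - (if m = j then (2:ℚ)^(s-1) else 0) := by
    intro j
    by_cases hj : m = j
    · obtain ⟨s', rfl⟩ : ∃ s', s = s' + 1 := ⟨s-1, by omega⟩
      simp [hj, pow_succ]; ring
    · simp [hj]
  rw [Finset.sum_congr rfl fun j _ => hsplit j, Finset.sum_sub_distrib,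
    Finset.sum_const, Finset.sum_ite_eq, card_odd_Icc]
  by_cases hm : Odd m
  · have hm1 : 1 ≤ m := hm.pos
    rw [if_pos (by simp [Finset.mem_Icc]; exact ⟨hm1, hm⟩)]
    obtain ⟨t, rfl⟩ := hm
    obtain ⟨s', rfl⟩ : ∃ s', s = s' + 1 := ⟨s-1, by omega⟩
    have h2 : (2*t+1+1)/2 = t+1 := by omega
    rw [h2]
    simp only [nsmul_eq_mul, pow_succ, Nat.add_sub_cancel]
    push_cast
    ring
  · rw [if_neg (fun hmem => hm (Finset.mem_filter.mp hmem).2)]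
    rw [Nat.not_odd_iff_even] at hm
    obtain ⟨t, rfl⟩ := hm
    obtain ⟨s', rfl⟩ : ∃ s', s = s' + 1 := ⟨s-1, by omega⟩
    have h2 : (t+t+1)/2 = t := by omega
    rw [h2]
    simp only [nsmul_eq_mul, pow_succ, Nat.add_sub_cancel, sub_zero]
    push_cast
    ring

lemma newton (k : ℕ) (hk : 1 ≤ k) :
    (k : ℚ) • qFun k
      = (2:ℚ) • ∑ j ∈ (Finset.Icc 1 k).filter (fun j => Odd j), pFun j * qFun (k - j) := by
  funext d
  have hL : ((k:ℚ) • qFun k) d = (k : ℚ) * qFun k d :=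
    MvPowerSeries.coeff_smul (qFun k) d (k : ℚ)
  have hR : ((2:ℚ) • ∑ j ∈ (Finset.Icc 1 k).filter (fun j => Odd j),
      pFun j * qFun (k - j)) d
        = 2 * ∑ j ∈ (Finset.Icc 1 k).filter (fun j => Odd j), (pFun j * qFun (k - j)) d := by
    have h1 : ((2:ℚ) • ∑ j ∈ (Finset.Icc 1 k).filter (fun j => Odd j),
        pFun j * qFun (k - j)) d
          = 2 * (∑ j ∈ (Finset.Icc 1 k).filter (fun j => Odd j), pFun j * qFun (k - j)) d :=
      MvPowerSeries.coeff_smul _ d 2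
    have h2 : (∑ j ∈ (Finset.Icc 1 k).filter (fun j => Odd j), pFun j * qFun (k - j)) d
        = ∑ j ∈ (Finset.Icc 1 k).filter (fun j => Odd j), (pFun j * qFun (k - j)) d :=
      by
        show MvPowerSeries.coeff (R := ℚ) d (∑ j ∈ (Finset.Icc 1 k).filter (fun j => Odd j),
          pFun j * qFun (k - j)) = _
        rw [map_sum]; rfl
    rw [h1, h2]
  rw [hL, hR, qFun_coeff]
  by_cases h : wt d = k
  · rw [if_pos h]
    have hne : d.support.Nonempty := by
      rcases Finset.eq_empty_or_nonempty d.support with he | hne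
      · exfalso
        have : wt d = 0 := by rw [wt_eq_sum, he]; simp
        omega
      · exact hne
    have hcard : 1 ≤ d.support.card := Finset.card_pos.mpr hne
    have hterm : ∀ j ∈ (Finset.Icc 1 k).filter (fun j => Odd j),
        (pFun j * qFun (k - j)) d
          = ∑ i ∈ d.support.filter (fun i => j ≤ d i),
              (2:ℚ)^(d.support.card - if d i = j then 1 else 0) := by
      intro j hj
      obtain ⟨hjk, hodd⟩ := Finset.mem_filter.mp hj
      rw [Finset.mem_Icc] at hjk
      rw [pFun_mul_coeff j (by omega)]
      refine Finset.sum_congr rfl fun i hi => ?_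
      obtain ⟨hisupp, hile⟩ := Finset.mem_filter.mp hi
      rw [qFun_coeff, wt_sub_single d i j hile, if_pos (by omega),
        card_support_sub_single d i j (by omega) hisupp hile]
    rw [Finset.sum_congr rfl hterm]
    rw [Finset.sum_comm' (t' := d.support)
      (s' := fun i => (Finset.Icc 1 (d i)).filter (fun j => Odd j)) ?hcomm]
    case hcomm =>
      intro j i
      have hle := apply_le_wt d i
      simp only [Finset.mem_filter, Finset.mem_Icc]
      constructor
      · rintro ⟨⟨⟨h1, h2⟩, ho⟩, hs, h3⟩; exact ⟨⟨⟨h1, h3⟩, ho⟩, hs⟩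
      · rintro ⟨⟨⟨h1, h3⟩, ho⟩, hs⟩; exact ⟨⟨⟨h1, by omega⟩, ho⟩, hs, h3⟩
    have hinner : ∀ i ∈ d.support,
        ∑ j ∈ (Finset.Icc 1 (d i)).filter (fun j => Odd j),
            (2:ℚ)^(d.support.card - if d i = j then 1 else 0)
          = 2^(d.support.card - 1) * (d i : ℚ) :=
      fun i hi => inner_sum (d i) d.support.card hcard
    rw [Finset.sum_congr rfl hinner, ← Finset.mul_sum]
    have hsd : ∑ i ∈ d.support, (d i : ℚ) = (k : ℚ) := by
      rw [← Nat.cast_sum, ← wt_eq_sum, h]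
    rw [hsd]
    obtain ⟨s', hs'⟩ : ∃ s', d.support.card = s' + 1 := ⟨d.support.card - 1, by omega⟩
    rw [hs']
    simp only [Nat.add_sub_cancel, pow_succ]
    ring
  · rw [if_neg h, mul_zero]
    rw [Finset.sum_eq_zero, mul_zero]
    intro j hj
    obtain ⟨hjk, hodd⟩ := Finset.mem_filter.mp hj
    rw [Finset.mem_Icc] at hjk
    rw [pFun_mul_coeff j (by omega)]
    apply Finset.sum_eq_zero
    intro i hi
    obtain ⟨hisupp, hile⟩ := Finset.mem_filter.mp hi
    rw [qFun_coeff, if_neg]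
    rw [wt_sub_single d i j hile]
    have := apply_le_wt d i
    omega

lemma wt_eq_zero_iff (d : ℕ →₀ ℕ) : wt d = 0 ↔ d = 0 := by
  constructor
  · intro h
    ext i
    have := apply_le_wt d i
    simp; omega
  · rintro rfl
    rfl

noncomputable def pL (L : List ℕ) : MvPowerSeries ℕ ℚ := (L.map pFun).prod

def gens (m : ℕ) : Set (MvPowerSeries ℕ ℚ) :=
  {f | ∃ L : List ℕ, (∀ x ∈ L, 0 < x) ∧ m ≤ L.length ∧ f = pL L}

noncomputable def P (m : ℕ) : Submodule ℚ (MvPowerSeries ℕ ℚ) := Submodule.span ℚ (gens m)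

lemma P_antitone {m m' : ℕ} (h : m ≤ m') : P m' ≤ P m :=
  Submodule.span_mono (fun f => fun ⟨L, h1, h2, h3⟩ => ⟨L, h1, le_trans h h2, h3⟩)

lemma pL_append (L L' : List ℕ) : pL (L ++ L') = pL L * pL L' := by
  rw [pL, pL, pL, List.map_append, List.prod_append]

lemma mul_mem_P {f g : MvPowerSeries ℕ ℚ} {m m' : ℕ} (hf : f ∈ P m) (hg : g ∈ P m') :
    f * g ∈ P (m + m') := by
  have h1 : f * g ∈ P m * P m' := Submodule.mul_mem_mul hf hg
  rw [P, P, Submodule.span_mul_span] at h1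
  refine Submodule.span_le.mpr ?_ h1
  rintro x ⟨a, ha, b, hb, rfl⟩
  obtain ⟨L1, hp1, hl1, rfl⟩ := ha
  obtain ⟨L2, hp2, hl2, rfl⟩ := hb
  refine Submodule.subset_span ⟨L1 ++ L2, ?_, ?_, (pL_append L1 L2).symm⟩
  · intro x hx
    rcases List.mem_append.mp hx with h | h
    · exact hp1 x h
    · exact hp2 x h
  · rw [List.length_append]; omega

lemma pL_nil : pL [] = 1 := by simp [pL]

lemma pL_singleton (j : ℕ) : pL [j] = pFun j := by simp [pL]

lemma one_mem_P0 : (1 : MvPowerSeries ℕ ℚ) ∈ P 0 :=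
  Submodule.subset_span ⟨[], by simp, by simp, pL_nil.symm⟩

lemma pFun_mem (j : ℕ) (hj : 0 < j) : pFun j ∈ P 1 :=
  Submodule.subset_span ⟨[j], by simpa using hj, by simp, (pL_singleton j).symm⟩

lemma qFun_zero : qFun 0 = 1 := by
  funext d
  have h1 : (1 : MvPowerSeries ℕ ℚ) d = if d = 0 then 1 else 0 :=
    MvPowerSeries.coeff_one d (R := ℚ)
  rw [qFun_coeff, h1]
  by_cases h : d = 0
  · subst h
    rw [if_pos (by rfl), if_pos rfl]
    simp
  · rw [if_neg (fun hw => h ((wt_eq_zero_iff d).mp hw)), if_neg h]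

/-- the minimal `p`-length of `q_k`. -/
def mlow (k : ℕ) : ℕ := if k = 0 then 0 else if Odd k then 1 else 2

lemma qFun_mem (k : ℕ) : qFun k ∈ P (mlow k) := by
  induction k using Nat.strong_induction_on with
  | _ k ih =>
  rcases Nat.eq_zero_or_pos k with rfl | hk
  · rw [qFun_zero]
    simpa [mlow] using one_mem_P0
  · have hnz : (k : ℚ) ≠ 0 := Nat.cast_ne_zero.mpr (by omega)
    have hq : qFun k = (k : ℚ)⁻¹ • ((2:ℚ) • ∑ j ∈ (Finset.Icc 1 k).filter (fun j => Odd j),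
        pFun j * qFun (k - j)) := by
      rw [← newton k hk, smul_smul, inv_mul_cancel₀ hnz, one_smul]
    rw [hq]
    refine Submodule.smul_mem _ _ (Submodule.smul_mem _ _ (Submodule.sum_mem _ ?_))
    intro j hj
    obtain ⟨hjk, hodd⟩ := Finset.mem_filter.mp hj
    rw [Finset.mem_Icc] at hjk
    have h1 : pFun j ∈ P 1 := pFun_mem j (by omega)
    have h2 : qFun (k - j) ∈ P (mlow (k - j)) := ih (k - j) (by omega)
    refine P_antitone ?_ (mul_mem_P h1 h2)
    rw [Nat.odd_iff] at hodd
    simp only [mlow, Nat.odd_iff]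
    split_ifs <;> omega

lemma pL_cons (k : ℕ) (L : List ℕ) : pL (k :: L) = pFun k * pL L := by
  rw [pL, pL, List.map_cons, List.prod_cons]

lemma one_coeff (d : ℕ →₀ ℕ) : (1 : MvPowerSeries ℕ ℚ) d = if d = 0 then 1 else 0 :=
  MvPowerSeries.coeff_one d (R := ℚ)

lemma pL_coeff_wt {L : List ℕ} (hL : ∀ x ∈ L, 0 < x) {d : ℕ →₀ ℕ} (h : pL L d ≠ 0) :
    wt d = L.sum := by
  induction L generalizing d with
  | nil =>
    rw [pL_nil, one_coeff] at h
    have : d = 0 := by by_contra hne; rw [if_neg hne] at h; exact h rfl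
    subst this; rfl
  | cons k L ih =>
    have hk : 0 < k := hL k (by simp)
    rw [pL_cons, pFun_mul_coeff k hk] at h
    obtain ⟨i, hi, hne⟩ := Finset.exists_ne_zero_of_sum_ne_zero h
    obtain ⟨hisupp, hile⟩ := Finset.mem_filter.mp hi
    have hwt := wt_sub_single d i k hile
    have hih := ih (fun x hx => hL x (by simp [hx])) hne
    have : k ≤ wt d := le_trans hile (apply_le_wt d i)
    simp only [List.sum_cons]
    omega

lemma pL_coeff_card {L : List ℕ} (hL : ∀ x ∈ L, 0 < x) {d : ℕ →₀ ℕ} (h : pL L d ≠ 0) :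
    d.support.card ≤ L.length := by
  induction L generalizing d with
  | nil =>
    rw [pL_nil, one_coeff] at h
    have : d = 0 := by by_contra hne; rw [if_neg hne] at h; exact h rfl
    subst this; simp
  | cons k L ih =>
    have hk : 0 < k := hL k (by simp)
    rw [pL_cons, pFun_mul_coeff k hk] at h
    obtain ⟨i, hi, hne⟩ := Finset.exists_ne_zero_of_sum_ne_zero h
    obtain ⟨hisupp, hile⟩ := Finset.mem_filter.mp hi
    have hcard := card_support_sub_single d i k hk hisupp hile
    have hih := ih (fun x hx => hL x (by simp [hx])) hne
    simp only [List.length_cons]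
    by_cases hdi : d i = k <;> simp [hdi] at hcard <;> omega

lemma pL_coeff_eq {L : List ℕ} (hL : ∀ x ∈ L, 0 < x) {d : ℕ →₀ ℕ} (h : pL L d ≠ 0)
    (hc : d.support.card = L.length) : d.support.val.map d = (L : Multiset ℕ) := by
  induction L generalizing d with
  | nil =>
    rw [pL_nil, one_coeff] at h
    have : d = 0 := by by_contra hne; rw [if_neg hne] at h; exact h rfl
    subst this; simp
  | cons k L ih =>
    have hk : 0 < k := hL k (by simp)
    rw [pL_cons, pFun_mul_coeff k hk] at h
    obtain ⟨i, hi, hne⟩ := Finset.exists_ne_zero_of_sum_ne_zero h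
    obtain ⟨hisupp, hile⟩ := Finset.mem_filter.mp hi
    have hcard := card_support_sub_single d i k hk hisupp hile
    have hle := pL_coeff_card (fun x hx => hL x (by simp [hx])) hne
    have hdi : d i = k := by
      by_contra hdi
      rw [if_neg hdi] at hcard
      simp only [List.length_cons] at hc
      omega
    rw [if_pos hdi] at hcard
    have hsupp : (d - Finsupp.single i k).support = d.support.erase i := by
      rw [support_sub_single d i k hk hile, if_pos hdi]
    have hc' : (d - Finsupp.single i k).support.card = L.length := by
      simp only [List.length_cons] at hc
      have hcardpos : 1 ≤ d.support.card := Finset.card_pos.mpr ⟨i, hisupp⟩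
      omega
    have hih := ih (fun x hx => hL x (by simp [hx])) hne hc'
    have hval : d.support.val = i ::ₘ (d.support.erase i).val := by
      rw [Finset.erase_val]
      exact (Multiset.cons_erase (by exact hisupp)).symm
    rw [hval, Multiset.map_cons, hdi]
    have hmapeq : (d.support.erase i).val.map d
        = (d.support.erase i).val.map (d - Finsupp.single i k) := by
      apply Multiset.map_congr rfl
      intro a ha
      have hai : a ≠ i := by
        intro hcon
        subst hcon
        exact (Finset.notMem_erase a d.support) ha
      rw [sub_single_apply, if_neg hai]
      omega
    rw [hmapeq, ← hsupp, hih]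
    rfl

lemma pL_coeff_nonneg (L : List ℕ) (hL : ∀ x ∈ L, 0 < x) (d : ℕ →₀ ℕ) :
    0 ≤ pL L d := by
  induction L generalizing d with
  | nil =>
    rw [pL_nil, one_coeff]
    split_ifs <;> norm_num
  | cons k L ih =>
    have hk : 0 < k := hL k (by simp)
    rw [pL_cons, pFun_mul_coeff k hk]
    exact Finset.sum_nonneg fun i _ => ih (fun x hx => hL x (by simp [hx])) _

lemma pL_coeff_pos {L : List ℕ} (hL : ∀ x ∈ L, 0 < x) {d : ℕ →₀ ℕ}
    (hc : d.support.card = L.length) (hv : d.support.val.map d = (L : Multiset ℕ)) :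
    0 < pL L d := by
  induction L generalizing d with
  | nil =>
    have : d = 0 := by
      have : d.support = ∅ := Finset.card_eq_zero.mp hc
      exact Finsupp.support_eq_empty.mp this
    subst this
    rw [pL_nil, one_coeff, if_pos rfl]
    norm_num
  | cons k L ih =>
    have hk : 0 < k := hL k (by simp)
    have hkmem : k ∈ d.support.val.map d := by rw [hv]; simp
    obtain ⟨i, hisupp', hdi⟩ := Multiset.mem_map.mp hkmem
    have hisupp : i ∈ d.support := hisupp'
    have hile : k ≤ d i := le_of_eq hdi.symm
    have hsupp : (d - Finsupp.single i k).support = d.support.erase i := by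
      rw [support_sub_single d i k hk hile, if_pos hdi]
    have hval : d.support.val = i ::ₘ (d.support.erase i).val := by
      rw [Finset.erase_val]
      exact (Multiset.cons_erase (by exact hisupp)).symm
    have hmapeq : (d.support.erase i).val.map d
        = (d.support.erase i).val.map (d - Finsupp.single i k) := by
      apply Multiset.map_congr rfl
      intro a ha
      have hai : a ≠ i := by
        intro hcon
        subst hcon
        exact (Finset.notMem_erase a d.support) ha
      rw [sub_single_apply, if_neg hai]
      omega
    have hv' : (d - Finsupp.single i k).support.val.map (d - Finsupp.single i k)
        = (L : Multiset ℕ) := by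
      have h1 : k ::ₘ (L : Multiset ℕ) = k ::ₘ (d.support.erase i).val.map d := by
        rw [Multiset.cons_coe, ← hv, hval, Multiset.map_cons, hdi]
      have h2 : (L : Multiset ℕ) = (d.support.erase i).val.map d :=
        (Multiset.cons_inj_right k).mp h1
      rw [hsupp, ← hmapeq, ← h2]
    have hc' : (d - Finsupp.single i k).support.card = L.length := by
      have : Multiset.card ((d - Finsupp.single i k).support.val.map (d - Finsupp.single i k))
          = Multiset.card (L : Multiset ℕ) := by rw [hv']
      simpa using this
    have hpos := ih (fun x hx => hL x (by simp [hx])) hc' hv'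
    rw [pL_cons, pFun_mul_coeff k hk]
    refine Finset.sum_pos' (fun j _ => pL_coeff_nonneg L (fun x hx => hL x (by simp [hx])) _) ?_
    exact ⟨i, Finset.mem_filter.mpr ⟨hisupp, hile⟩, hpos⟩

/-- a spread-out monomial with exponents given by `L` -/
noncomputable def spread (L : List ℕ) : ℕ →₀ ℕ :=
  Finsupp.onFinset (Finset.range L.length) (fun i => L.getD i 0)
    (fun i h => by
      rw [Finset.mem_range]
      by_contra hcon
      exact h (List.getD_eq_default L 0 (by omega)))

lemma spread_apply (L : List ℕ) (i : ℕ) : spread L i = L.getD i 0 := rfl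

lemma spread_support (L : List ℕ) (hL : ∀ x ∈ L, 0 < x) :
    (spread L).support = Finset.range L.length := by
  ext i
  rw [Finsupp.mem_support_iff, spread_apply, Finset.mem_range]
  constructor
  · intro h
    by_contra hcon
    exact h (List.getD_eq_default L 0 (by omega))
  · intro h
    rw [List.getD_eq_getElem L 0 h]
    exact (hL _ (List.getElem_mem h)).ne'

lemma spread_values (L : List ℕ) (hL : ∀ x ∈ L, 0 < x) :
    (spread L).support.val.map (spread L) = (L : Multiset ℕ) := by
  rw [spread_support L hL]
  have : (Finset.range L.length).val = ((List.range L.length : List ℕ) : Multiset ℕ) := rfl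
  rw [this]
  have : Multiset.map (spread L) ((List.range L.length : List ℕ) : Multiset ℕ)
      = ((List.range L.length).map (fun i => L.getD i 0) : Multiset ℕ) := rfl
  rw [this]
  congr 1
  apply List.ext_getElem
  · simp
  · intro i h1 h2
    simp only [List.getElem_map, List.getElem_range]
    exact List.getD_eq_getElem L 0 (by simpa using h2)

noncomputable def pM (M : Multiset ℕ) : MvPowerSeries ℕ ℚ := (M.map pFun).prod

lemma pM_coe (L : List ℕ) : pM (L : Multiset ℕ) = pL L := by
  rw [pM, pL]
  rfl

lemma pM_toList (M : Multiset ℕ) : pM M = pL M.toList := by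
  rw [← pM_coe, Multiset.coe_toList]

lemma apply_sum {α : Type*} (s : Finset α) (f : α → MvPowerSeries ℕ ℚ) (d : ℕ →₀ ℕ) :
    (∑ x ∈ s, f x) d = ∑ x ∈ s, f x d := by
  classical
  induction s using Finset.cons_induction with
  | empty => rfl
  | cons a s ha ih =>
    rw [Finset.sum_cons, Finset.sum_cons, ← ih]
    rfl

lemma apply_smul (a : ℚ) (f : MvPowerSeries ℕ ℚ) (d : ℕ →₀ ℕ) : (a • f) d = a * f d :=
  MvPowerSeries.coeff_smul f d a

/-- linear independence of products of power sums indexed by multisets -/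
lemma indep (t : Finset (Multiset ℕ)) (hpos : ∀ M ∈ t, ∀ x ∈ M, 0 < x)
    (b : Multiset ℕ → ℚ) (hsum : ∑ M ∈ t, b M • pM M = 0) : ∀ M ∈ t, b M = 0 := by
  classical
  induction t using Finset.strongInduction with
  | _ t ih =>
  intro M hM
  rcases Finset.eq_empty_or_nonempty t with rfl | hne
  · simp at hM
  -- pick the maximal-cardinality element in the sum-class of some element
  obtain ⟨M₁, hM₁mem, hM₁max⟩ :=
    Finset.exists_max_image (t.filter (fun M' => M'.sum = M.sum)) Multiset.card
      ⟨M, Finset.mem_filter.mpr ⟨hM, rfl⟩⟩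
  obtain ⟨hM₁t, hM₁sum⟩ := Finset.mem_filter.mp hM₁mem
  -- positivity data for M₁
  have hpos₁ : ∀ x ∈ M₁.toList, 0 < x := fun x hx => hpos M₁ hM₁t x (by
    rwa [← Multiset.mem_toList])
  set d₁ := spread M₁.toList with hd₁
  have hc₁ : d₁.support.card = M₁.toList.length := by
    rw [hd₁, spread_support _ hpos₁, Finset.card_range]
  have hv₁ : d₁.support.val.map d₁ = (M₁.toList : Multiset ℕ) := spread_values _ hpos₁
  have hcard₁ : d₁.support.card = Multiset.card M₁ := by
    rw [hc₁, Multiset.length_toList]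
  have hv₁' : d₁.support.val.map d₁ = M₁ := by rw [hv₁, Multiset.coe_toList]
  have hpos₁' : 0 < pM M₁ d₁ := by
    rw [pM_toList]
    exact pL_coeff_pos hpos₁ hc₁ hv₁
  have hwt₁ : wt d₁ = M₁.sum := by
    rw [pM_toList] at hpos₁'
    have := pL_coeff_wt hpos₁ hpos₁'.ne'
    rwa [← Multiset.sum_toList]
  -- evaluate the sum at d₁
  have hz : ∑ M' ∈ t, b M' * pM M' d₁ = 0 := by
    have h0 : (∑ M ∈ t, b M • pM M) d₁ = (0 : MvPowerSeries ℕ ℚ) d₁ :=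
      congrArg (fun f : MvPowerSeries ℕ ℚ => f d₁) hsum
    rw [apply_sum] at h0
    calc ∑ M' ∈ t, b M' * pM M' d₁
        = ∑ M' ∈ t, (b M' • pM M') d₁ :=
          Finset.sum_congr rfl fun M' _ => (apply_smul (b M') (pM M') d₁).symm
      _ = (0 : MvPowerSeries ℕ ℚ) d₁ := h0
      _ = 0 := rfl
  have hsingle : ∑ M' ∈ t, b M' * pM M' d₁ = b M₁ * pM M₁ d₁ := by
    apply Finset.sum_eq_single M₁
    · intro M' hM't hne'
      by_cases hz' : pM M' d₁ = 0
      · rw [hz', mul_zero]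
      · exfalso
        have hposL : ∀ x ∈ M'.toList, 0 < x := fun x hx => hpos M' hM't x (by
          rwa [← Multiset.mem_toList])
        rw [pM_toList] at hz'
        have hwt := pL_coeff_wt hposL hz'
        have hsum' : M'.sum = M₁.sum := by
          rw [← Multiset.sum_toList, ← hwt, hwt₁]
        have hcardle : Multiset.card M₁ ≤ Multiset.card M' := by
          have := pL_coeff_card hposL hz'
          rw [Multiset.length_toList] at this
          omega
        have hcardge : Multiset.card M' ≤ Multiset.card M₁ :=
          hM₁max M' (Finset.mem_filter.mpr ⟨hM't, by rw [hsum', hM₁sum]⟩)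
        have hcardeq : d₁.support.card = M'.toList.length := by
          rw [Multiset.length_toList]; omega
        have := pL_coeff_eq hposL hz' hcardeq
        rw [hv₁', Multiset.coe_toList] at this
        exact hne' this.symm
    · intro h; exact absurd hM₁t h
  have hbM₁ : b M₁ = 0 := by
    rw [hsingle] at hz
    exact (mul_eq_zero.mp hz).resolve_right hpos₁'.ne'
  by_cases hMM₁ : M = M₁
  · rwa [hMM₁]
  · -- remove M₁ and recurse
    have hsub : t.erase M₁ ⊂ t := Finset.erase_ssubset hM₁t
    have hsum' : ∑ M' ∈ t.erase M₁, b M' • pM M' = 0 := by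
      have h4 := Finset.add_sum_erase t (fun M' => b M' • pM M') hM₁t
      simp only [hbM₁, zero_smul, zero_add, hsum] at h4
      exact h4
    exact ih (t.erase M₁) hsub
      (fun M' hM' => hpos M' (Finset.mem_of_mem_erase hM'))
      hsum' M (Finset.mem_erase.mpr ⟨hMM₁, hM⟩)

lemma mem_P_coeffs {n : ℕ} (m : ℕ) (c : Nat.Partition n → ℚ)
    (hmem : (∑ π : Nat.Partition n, c π • pM π.parts) ∈ P m) :
    ∀ π : Nat.Partition n, Multiset.card π.parts < m → c π = 0 := by
  classical
  rw [P, Submodule.mem_span_set] at hmem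
  obtain ⟨a, hasupp, hrep⟩ := hmem
  set Mf : MvPowerSeries ℕ ℚ → Multiset ℕ :=
    fun g => if h : g ∈ gens m then ((h.choose : List ℕ) : Multiset ℕ) else 0 with hMf
  have hMfspec : ∀ g ∈ a.support, pM (Mf g) = g ∧ m ≤ Multiset.card (Mf g)
      ∧ ∀ x ∈ Mf g, 0 < x := by
    intro g hg
    have hgens : g ∈ gens m := hasupp hg
    obtain ⟨h1, h2, h3⟩ := hgens.choose_spec
    refine ⟨?_, ?_, ?_⟩
    · rw [hMf]
      simp only [dif_pos hgens]
      rw [pM_coe, ← h3]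
    · rw [hMf]
      simp only [dif_pos hgens]
      rw [Multiset.coe_card]
      exact h2
    · intro x hx
      rw [hMf] at hx
      simp only [dif_pos hgens] at hx
      exact h1 x (by exact_mod_cast hx)
  set t : Finset (Multiset ℕ) :=
    (Finset.univ.image (fun π : Nat.Partition n => π.parts)) ∪ a.support.image Mf with ht
  set b : Multiset ℕ → ℚ := fun M =>
    (∑ π ∈ Finset.univ.filter (fun π : Nat.Partition n => π.parts = M), c π)
      - (∑ g ∈ a.support.filter (fun g => Mf g = M), a g) with hb
  have hposT : ∀ M ∈ t, ∀ x ∈ M, 0 < x := by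
    intro M hM
    rcases Finset.mem_union.mp hM with h | h
    · obtain ⟨π, _, rfl⟩ := Finset.mem_image.mp h
      intro x hx
      exact π.parts_pos hx
    · obtain ⟨g, hg, rfl⟩ := Finset.mem_image.mp h
      exact (hMfspec g hg).2.2
  have hmapsto1 : ∀ π ∈ (Finset.univ : Finset (Nat.Partition n)),
      (fun π : Nat.Partition n => π.parts) π ∈ t :=
    fun π _ => Finset.mem_union_left _ (Finset.mem_image.mpr ⟨π, Finset.mem_univ π, rfl⟩)
  have hmapsto2 : ∀ g ∈ a.support, Mf g ∈ t :=
    fun g hg => Finset.mem_union_right _ (Finset.mem_image.mpr ⟨g, hg, rfl⟩)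
  have e1 : ∑ M ∈ t, (∑ π ∈ Finset.univ.filter (fun π : Nat.Partition n => π.parts = M), c π)
        • pM M = ∑ π : Nat.Partition n, c π • pM π.parts := by
    rw [← Finset.sum_fiberwise_of_maps_to hmapsto1 (fun π => c π • pM π.parts)]
    refine Finset.sum_congr rfl fun M _ => ?_
    rw [Finset.sum_smul]
    refine Finset.sum_congr rfl fun π hπ => ?_
    rw [(Finset.mem_filter.mp hπ).2]
  have e2 : ∑ M ∈ t, (∑ g ∈ a.support.filter (fun g => Mf g = M), a g) • pM M
      = ∑ g ∈ a.support, a g • g := by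
    rw [← Finset.sum_fiberwise_of_maps_to hmapsto2 (fun g => a g • g)]
    refine Finset.sum_congr rfl fun M _ => ?_
    rw [Finset.sum_smul]
    refine Finset.sum_congr rfl fun g hg => ?_
    obtain ⟨hg1, hg2⟩ := Finset.mem_filter.mp hg
    rw [← hg2, (hMfspec g hg1).1]
  have hsumz : ∑ M ∈ t, b M • pM M = 0 := by
    have : ∀ M ∈ t, b M • pM M
        = (∑ π ∈ Finset.univ.filter (fun π : Nat.Partition n => π.parts = M), c π) • pM M
          - (∑ g ∈ a.support.filter (fun g => Mf g = M), a g) • pM M := by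
      intro M _
      rw [hb, sub_smul]
    rw [Finset.sum_congr rfl this, Finset.sum_sub_distrib, e1, e2]
    have hrep' : ∑ g ∈ a.support, a g • g = ∑ π : Nat.Partition n, c π • pM π.parts := hrep
    rw [hrep', sub_self]
  have hzero := indep t hposT b hsumz
  intro π₀ hπ₀
  have hM₀ : π₀.parts ∈ t := hmapsto1 π₀ (Finset.mem_univ π₀)
  have hb₀ := hzero π₀.parts hM₀
  rw [hb] at hb₀
  have hfilter1 : Finset.univ.filter (fun π : Nat.Partition n => π.parts = π₀.parts) = {π₀} := by
    ext π
    simp only [Finset.mem_filter, Finset.mem_univ, true_and, Finset.mem_singleton]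
    constructor
    · intro h
      exact Nat.Partition.ext h
    · rintro rfl
      rfl
  have hfilter2 : a.support.filter (fun g => Mf g = π₀.parts) = ∅ := by
    rw [Finset.filter_eq_empty_iff]
    intro g hg heq
    have := (hMfspec g hg).2.1
    rw [heq] at this
    omega
  simp only [hfilter1, hfilter2] at hb₀
  simpa using hb₀

def oc (l : List ℕ) : ℕ := (l.map (fun x => x % 2)).sum

def srank (l : List ℕ) : ℕ :=
  max (l.countP (fun x => decide (Odd x))) (l.countP (fun x => decide (Even x)) + l.length % 2)

lemma oc_cons (a : ℕ) (l : List ℕ) : oc (a :: l) = a % 2 + oc l := by simp [oc]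

lemma oc_le_length (l : List ℕ) : oc l ≤ l.length := by
  induction l with
  | nil => simp [oc]
  | cons a l ih =>
    rw [oc_cons]
    simp only [List.length_cons]
    omega

lemma oc_perm {l l' : List ℕ} (h : l.Perm l') : oc l = oc l' :=
  (h.map _).sum_eq

lemma countP_odd_eq (l : List ℕ) : l.countP (fun x => decide (Odd x)) = oc l := by
  induction l with
  | nil => rfl
  | cons a l ih =>
    rw [List.countP_cons, ih, oc_cons]
    by_cases h : Odd a
    · have h2 := Nat.odd_iff.mp h
      simp [h]
      omega
    · have h2 : a % 2 = 0 := by rw [Nat.odd_iff] at h; omega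
      simp [h]
      omega

lemma countP_even_eq (l : List ℕ) : l.countP (fun x => decide (Even x)) = l.length - oc l := by
  induction l with
  | nil => rfl
  | cons a l ih =>
    rw [List.countP_cons, ih, oc_cons]
    have hle := oc_le_length l
    simp only [List.length_cons]
    by_cases h : Even a
    · have h2 : a % 2 = 0 := Nat.even_iff.mp h
      simp [h]
      omega
    · have h2 : a % 2 = 1 := by rw [Nat.even_iff] at h; omega
      simp [h]
      omega

lemma srank_eq (l : List ℕ) : srank l = max (oc l) (l.length - oc l + l.length % 2) := by
  rw [srank, countP_odd_eq, countP_even_eq]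

lemma mlow_eq {x : ℕ} (hx : 0 < x) : mlow x = 2 - x % 2 := by
  rw [mlow, if_neg (by omega)]
  by_cases h : Odd x
  · rw [if_pos h]; rw [Nat.odd_iff] at h; omega
  · rw [if_neg h]; rw [Nat.odd_iff] at h; omega

lemma C_mul_mem {x : MvPowerSeries ℕ ℚ} {m : ℕ} (r : ℚ) (h : x ∈ P m) :
    MvPowerSeries.C (σ := ℕ) (R := ℚ) r * x ∈ P m := by
  rw [← MvPowerSeries.smul_eq_C_mul]
  exact Submodule.smul_mem _ r h

lemma two_mul_mem {x : MvPowerSeries ℕ ℚ} {m : ℕ} (h : x ∈ P m) :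
    2 * x ∈ P m := by
  have h2 : (2 : MvPowerSeries ℕ ℚ) = MvPowerSeries.C (σ := ℕ) (R := ℚ) 2 := by
    rw [map_ofNat]
  rw [h2]
  exact C_mul_mem 2 h

lemma perm_eraseIdx (l : List ℕ) (i : ℕ) (h : i < l.length) :
    l.Perm (l[i] :: l.eraseIdx i) := by
  induction l generalizing i with
  | nil => simp at h
  | cons y ys ih =>
    cases i with
    | zero => simp
    | succ i =>
      have h' : i < ys.length := by simpa using h
      rw [List.getElem_cons_succ, List.eraseIdx_cons_succ]
      exact (((ih i h').cons y)).trans (List.Perm.swap _ _ _)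

section main

variable (Q : List ℕ → MvPowerSeries ℕ ℚ)

lemma pair_mem
    (hQ2 : ∀ a b : ℕ, 0 < b → b < a →
      Q [a, b] = qFun a * qFun b +
        2 * ∑ m ∈ Finset.Icc 1 b,
          MvPowerSeries.C (σ := ℕ) (R := ℚ) ((-1 : ℚ) ^ m) * (qFun (a + m) * qFun (b - m)))
    (a b : ℕ) (hb : 0 < b) (hba : b < a) : Q [a, b] ∈ P (srank [a, b]) := by
  have ha : 0 < a := lt_trans hb hba
  have hoc : oc [a, b] = a % 2 + b % 2 := by simp [oc]
  rw [hQ2 a b hb hba]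
  refine Submodule.add_mem _ ?_ ?_
  · refine P_antitone ?_ (mul_mem_P (qFun_mem a) (qFun_mem b))
    rw [srank_eq, mlow_eq ha, mlow_eq hb, hoc,
      show ([a, b] : List ℕ).length = 2 from rfl]
    refine Nat.max_le.mpr ⟨?_, ?_⟩ <;> omega
  · refine two_mul_mem (Submodule.sum_mem _ fun m hm => ?_)
    rw [Finset.mem_Icc] at hm
    refine C_mul_mem _ (P_antitone ?_ (mul_mem_P (qFun_mem (a + m)) (qFun_mem (b - m))))
    rw [srank_eq, hoc, mlow_eq (show 0 < a + m by omega),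
      show ([a, b] : List ℕ).length = 2 from rfl]
    by_cases hbm : b - m = 0
    · rw [hbm]
      have h0 : mlow 0 = 0 := rfl
      rw [h0]
      refine Nat.max_le.mpr ⟨?_, ?_⟩ <;> omega
    · rw [mlow_eq (show 0 < b - m by omega)]
      refine Nat.max_le.mpr ⟨?_, ?_⟩ <;> omega

lemma mainQ
    (hQ1 : ∀ a : ℕ, 0 < a → Q [a] = qFun a)
    (hQ2 : ∀ a b : ℕ, 0 < b → b < a →
      Q [a, b] = qFun a * qFun b +
        2 * ∑ m ∈ Finset.Icc 1 b,
          MvPowerSeries.C (σ := ℕ) (R := ℚ) ((-1 : ℚ) ^ m) * (qFun (a + m) * qFun (b - m)))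
    (hQodd : ∀ l : List ℕ, l.Pairwise (· > ·) → (∀ x ∈ l, 0 < x) →
      Odd l.length → 3 ≤ l.length →
      Q l = ∑ i ∈ Finset.Icc 1 l.length,
        MvPowerSeries.C (σ := ℕ) (R := ℚ) ((-1 : ℚ) ^ (i + 1)) *
          (qFun (partAt l i) * Q (l.eraseIdx (i - 1))))
    (hQeven : ∀ l : List ℕ, l.Pairwise (· > ·) → (∀ x ∈ l, 0 < x) →
      Even l.length → 4 ≤ l.length →
      Q l = ∑ i ∈ Finset.Icc 2 l.length,
        MvPowerSeries.C (σ := ℕ) (R := ℚ) ((-1 : ℚ) ^ i) *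
          (Q [partAt l 1, partAt l i] * Q ((l.eraseIdx (i - 1)).tail))) :
    ∀ (N : ℕ) (l : List ℕ), l.length ≤ N → l.Pairwise (· > ·) → (∀ x ∈ l, 0 < x) →
      1 ≤ l.length → Q l ∈ P (srank l) := by
  intro N
  induction N with
  | zero =>
    intro l h1 _ _ h4
    omega
  | succ N ihN =>
    intro l hlen hsort hpos hne
    by_cases h1 : l.length = 1
    · obtain ⟨a, rfl⟩ : ∃ a, l = [a] := List.length_eq_one_iff.mp h1
      have ha : 0 < a := hpos a (by simp)
      rw [hQ1 a ha]
      refine P_antitone ?_ (qFun_mem a)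
      rw [srank_eq, mlow_eq ha]
      have hoc : oc [a] = a % 2 := by simp [oc]
      rw [hoc, show ([a] : List ℕ).length = 1 from rfl]
      refine Nat.max_le.mpr ⟨?_, ?_⟩ <;> omega
    by_cases h2 : l.length = 2
    · obtain ⟨a, b, rfl⟩ : ∃ a b, l = [a, b] := List.length_eq_two.mp h2
      have hab : b < a := by
        have := (List.pairwise_cons.mp hsort).1 b (by simp)
        exact this
      exact pair_mem Q hQ2 a b (hpos b (by simp)) hab
    have h3 : 3 ≤ l.length := by omega
    rcases Nat.even_or_odd l.length with heven | hodd
    · -- even length, ≥ 4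
      have hlp : l.length % 2 = 0 := Nat.even_iff.mp heven
      have h4 : 4 ≤ l.length := by omega
      rw [hQeven l hsort hpos heven h4]
      refine Submodule.sum_mem _ fun i hi => ?_
      rw [Finset.mem_Icc] at hi
      obtain ⟨hi2, hin⟩ := hi
      refine C_mul_mem _ ?_
      rcases l with _ | ⟨x, tl⟩
      · exfalso; simp at h3
      have hlen' : (x :: tl).length = tl.length + 1 := rfl
      have htl : i - 2 < tl.length := by
        simp only [List.length_cons] at hin h4
        omega
      have hp1 : partAt (x :: tl) 1 = x := rfl
      have hpi : partAt (x :: tl) i = tl[i - 2] := by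
        rw [partAt, show i - 1 = (i - 2) + 1 by omega, List.getD_cons_succ,
          List.getD_eq_getElem _ _ htl]
      have herase : ((x :: tl).eraseIdx (i - 1)).tail = tl.eraseIdx (i - 2) := by
        rw [show i - 1 = (i - 2) + 1 by omega, List.eraseIdx_cons_succ, List.tail_cons]
      set y := tl[i - 2] with hy
      have hymem : y ∈ tl := List.getElem_mem htl
      have hyx : y < x := (List.pairwise_cons.mp hsort).1 y hymem
      have hypos : 0 < y := hpos y (List.mem_cons_of_mem x hymem)
      have hpairmem : Q [x, y] ∈ P (srank [x, y]) := pair_mem Q hQ2 x y hypos hyx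
      -- the middle list
      have hsorttl : tl.Pairwise (· > ·) := (List.pairwise_cons.mp hsort).2
      have hsortM : (tl.eraseIdx (i - 2)).Pairwise (· > ·) :=
        List.Pairwise.sublist (List.eraseIdx_sublist tl (i - 2)) hsorttl
      have hposM : ∀ z ∈ tl.eraseIdx (i - 2), 0 < z := fun z hz =>
        hpos z (List.mem_cons_of_mem x ((List.eraseIdx_sublist tl (i - 2)).subset hz))
      have hlenM : (tl.eraseIdx (i - 2)).length = tl.length - 1 := by
        rw [List.length_eraseIdx, if_pos htl]
      have hMmem : Q (tl.eraseIdx (i - 2)) ∈ P (srank (tl.eraseIdx (i - 2))) := by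
        refine ihN (tl.eraseIdx (i - 2)) ?_ hsortM hposM ?_
        · simp only [List.length_cons] at hlen
          omega
        · simp only [List.length_cons] at h4
          omega
      rw [hp1, hpi, herase]
      refine P_antitone ?_ (mul_mem_P hpairmem hMmem)
      -- arithmetic
      have hocl : oc (x :: tl) = x % 2 + oc tl := oc_cons x tl
      have hoctl : oc tl = y % 2 + oc (tl.eraseIdx (i - 2)) := by
        rw [oc_perm (perm_eraseIdx tl (i - 2) htl), oc_cons]
      have hocpair : oc [x, y] = x % 2 + y % 2 := by simp [oc]
      have hR1a : x % 2 + y % 2 ≤ srank [x, y] := by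
        rw [srank_eq, hocpair]; exact le_max_left _ _
      have hR1b : 2 - (x % 2 + y % 2) ≤ srank [x, y] := by
        rw [srank_eq, hocpair, show ([x, y] : List ℕ).length = 2 from rfl]
        refine le_trans ?_ (le_max_right _ _)
        omega
      have hR2a : oc (tl.eraseIdx (i - 2)) ≤ srank (tl.eraseIdx (i - 2)) := by
        rw [srank_eq]; exact le_max_left _ _
      have hR2b : (tl.eraseIdx (i - 2)).length - oc (tl.eraseIdx (i - 2))
          ≤ srank (tl.eraseIdx (i - 2)) := by
        rw [srank_eq]
        refine le_trans ?_ (le_max_right _ _)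
        omega
      have hocle : oc (tl.eraseIdx (i - 2)) ≤ (tl.eraseIdx (i - 2)).length :=
        oc_le_length _
      rw [srank_eq]
      simp only [List.length_cons] at hlp h4 ⊢
      refine Nat.max_le.mpr ⟨?_, ?_⟩ <;> omega
    · -- odd length, ≥ 3
      have hlp : l.length % 2 = 1 := Nat.odd_iff.mp hodd
      rw [hQodd l hsort hpos hodd h3]
      refine Submodule.sum_mem _ fun i hi => ?_
      rw [Finset.mem_Icc] at hi
      obtain ⟨hi1, hin⟩ := hi
      refine C_mul_mem _ ?_
      have hidx : i - 1 < l.length := by omega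
      have hpi : partAt l i = l[i - 1] := List.getD_eq_getElem l 0 hidx
      set x := l[i - 1] with hx
      have hxmem : x ∈ l := List.getElem_mem hidx
      have hxpos : 0 < x := hpos x hxmem
      have hsortE : (l.eraseIdx (i - 1)).Pairwise (· > ·) :=
        List.Pairwise.sublist (List.eraseIdx_sublist l (i - 1)) hsort
      have hposE : ∀ z ∈ l.eraseIdx (i - 1), 0 < z := fun z hz =>
        hpos z ((List.eraseIdx_sublist l (i - 1)).subset hz)
      have hlenE : (l.eraseIdx (i - 1)).length = l.length - 1 := by
        rw [List.length_eraseIdx, if_pos hidx]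
      have hEmem : Q (l.eraseIdx (i - 1)) ∈ P (srank (l.eraseIdx (i - 1))) := by
        refine ihN (l.eraseIdx (i - 1)) (by omega) hsortE hposE (by omega)
      rw [hpi]
      refine P_antitone ?_ (mul_mem_P (qFun_mem x) hEmem)
      have hocl : oc l = x % 2 + oc (l.eraseIdx (i - 1)) := by
        rw [oc_perm (perm_eraseIdx l (i - 1) hidx), oc_cons]
      have hR2a : oc (l.eraseIdx (i - 1)) ≤ srank (l.eraseIdx (i - 1)) := by
        rw [srank_eq]; exact le_max_left _ _
      have hR2b : (l.eraseIdx (i - 1)).length - oc (l.eraseIdx (i - 1))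
          ≤ srank (l.eraseIdx (i - 1)) := by
        rw [srank_eq]
        refine le_trans ?_ (le_max_right _ _)
        omega
      have hocle : oc (l.eraseIdx (i - 1)) ≤ (l.eraseIdx (i - 1)).length :=
        oc_le_length _
      have hoclel : oc l ≤ l.length := oc_le_length l
      rw [srank_eq, mlow_eq hxpos]
      refine Nat.max_le.mpr ⟨?_, ?_⟩ <;> omega

end main

end QW

/-- Let `Q` satisfy Schur's inductive definition of the `Q`-functions (on strict
partitions, written as strictly decreasing lists of positive integers):
`Q_(a) = q_a`; `Q_(a,b) = q_a q_b + 2 Σ_{m>0} (-1)^m q_{a+m} q_{b-m}` (the terms with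
`m > b` vanish since `q` of a negative index is `0`); for odd length `≥ 3`,
`Q_λ = Σ_i (-1)^{i+1} q_{λ_i} Q_{λ∖λ_i}`; for even length `≥ 4`,
`Q_λ = Σ_{i≥2} (-1)^i Q_{(λ_1,λ_i)} Q_{λ∖{λ_1,λ_i}}`.
If `Q_λ = Σ_π c_π p_π`, summed over partitions `π` of `n`, then every `π` with `c_π ≠ 0`
satisfies `ℓ(π) ≥ srank(λ) = max(o, e + (ℓ(λ) mod 2))`. -/
theorem qschur_power_sum_length_bound
    (Q : List ℕ → MvPowerSeries ℕ ℚ)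
    (hQ1 : ∀ a : ℕ, 0 < a → Q [a] = qFun a)
    (hQ2 : ∀ a b : ℕ, 0 < b → b < a →
      Q [a, b] = qFun a * qFun b +
        2 * ∑ m ∈ Finset.Icc 1 b,
          MvPowerSeries.C (σ := ℕ) (R := ℚ) ((-1 : ℚ) ^ m) * (qFun (a + m) * qFun (b - m)))
    (hQodd : ∀ l : List ℕ, l.Pairwise (· > ·) → (∀ x ∈ l, 0 < x) →
      Odd l.length → 3 ≤ l.length →
      Q l = ∑ i ∈ Finset.Icc 1 l.length,
        MvPowerSeries.C (σ := ℕ) (R := ℚ) ((-1 : ℚ) ^ (i + 1)) *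
          (qFun (partAt l i) * Q (l.eraseIdx (i - 1))))
    (hQeven : ∀ l : List ℕ, l.Pairwise (· > ·) → (∀ x ∈ l, 0 < x) →
      Even l.length → 4 ≤ l.length →
      Q l = ∑ i ∈ Finset.Icc 2 l.length,
        MvPowerSeries.C (σ := ℕ) (R := ℚ) ((-1 : ℚ) ^ i) *
          (Q [partAt l 1, partAt l i] * Q ((l.eraseIdx (i - 1)).tail)))
    (n : ℕ) (l : List ℕ) (hl : IsStrictPartition n l)
    (c : Nat.Partition n → ℚ)
    (hc : Q l = ∑ π : Nat.Partition n, MvPowerSeries.C (σ := ℕ) (R := ℚ) (c π) * pProd π) :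
    ∀ π : Nat.Partition n, c π ≠ 0 →
      max (l.countP (fun x => decide (Odd x)))
        (l.countP (fun x => decide (Even x)) + l.length % 2) ≤ Multiset.card π.parts := by

  intro π hπ
  by_contra hlt
  push_neg at hlt
  obtain ⟨hsort, hpos, hsum⟩ := hl
  have hsr : max (l.countP (fun x => decide (Odd x)))
      (l.countP (fun x => decide (Even x)) + l.length % 2) = QW.srank l := rfl
  rw [hsr] at hlt
  rcases Nat.eq_zero_or_pos l.length with hlen0 | hlen1
  · have hnil : l = [] := List.length_eq_zero_iff.mp hlen0
    subst hnil
    have h0 : QW.srank [] = 0 := rfl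
    omega
  · have hmem := QW.mainQ Q hQ1 hQ2 hQodd hQeven l.length l le_rfl hsort hpos hlen1
    rw [hc] at hmem
    have heq : (∑ π : Nat.Partition n, MvPowerSeries.C (σ := ℕ) (R := ℚ) (c π) * pProd π)
        = ∑ π : Nat.Partition n, c π • QW.pM π.parts := by
      refine Finset.sum_congr rfl fun π _ => ?_
      rw [← MvPowerSeries.smul_eq_C_mul]
      rfl
    rw [heq] at hmem
    exact hπ (QW.mem_P_coeffs _ c hmem π hlt)
end

section
/- Let λ be a strict partition with o odd parts and e even parts, and suppose o ≥ e. Let T* be a minimal bar tableau of shape λ in which no bar boundary occurs an even number of squares along any row. Then every bar of type 3 in T* consists of an entire even row paired with an entire odd row, there are exactly e bars of type 3, and each of the remaining o − e odd rows is filled entirely by a single label of its own; consequently T* has exactly o bars. -/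
/-- A bar tableau of shape `l` (a strict partition), presented as the list of rows of labels:
(0) the row lengths are exactly the parts of `l` and all labels are positive;
(1) entries weakly increase along each row;
(2) every label that appears does so in an odd total number of cells;
(3) every label appears in at most two rows, and if it appears in two rows then it begins
    (is a prefix of) both rows;
(4) for every `i`, the nonzero row lengths remaining after deleting all cells labelled `> i`
    are pairwise distinct. -/
def IsBarTableau (l : List ℕ) (T : List (List ℕ)) : Prop :=
  T.map List.length = l ∧
  (∀ row ∈ T, ∀ x ∈ row, 0 < x) ∧
  (∀ row ∈ T, row.Chain' (· ≤ ·)) ∧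
  (∀ v ∈ T.flatten, Odd (T.flatten.count v)) ∧
  (∀ v : ℕ, T.countP (fun row => decide (v ∈ row)) ≤ 2) ∧
  (∀ v : ℕ, T.countP (fun row => decide (v ∈ row)) = 2 →
      ∀ row ∈ T, v ∈ row → row.head? = some v) ∧
  (∀ i : ℕ,
    (((T.map (fun row => row.filter (fun x => decide (x ≤ i)))).map List.length).filter
        (fun k => decide (k ≠ 0))).Nodup)

/-- The number of bars of a tableau: the number of distinct labels used. -/
def numBars (T : List (List ℕ)) : ℕ := T.flatten.dedup.length

/-- A bar boundary occurs an even number of squares along a row: for some even `k > 0`,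
the first `k` cells of the row all carry labels strictly smaller than the `(k+1)`-st cell. -/
def HasEvenBoundary (row : List ℕ) : Prop :=
  ∃ k : ℕ, 0 < k ∧ Even k ∧ k < row.length ∧ ∀ c ∈ row.take k, c < row.getD k 0

open List

section Aux

lemma length_le_one_of_nodup {α : Type*} {l : List α} (h : l.Nodup)
    (h2 : ∀ a ∈ l, ∀ b ∈ l, a = b) : l.length ≤ 1 := by
  match l with
  | [] => simp
  | [a] => simp
  | a :: b :: t =>
    exfalso
    have := h2 a (by simp) b (by simp)
    simp [this] at h

lemma eq_singleton_of {α : Type*} {l : List α} (h : l.Nodup)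
    (h2 : ∀ a ∈ l, ∀ b ∈ l, a = b) {x : α} (hx : x ∈ l) : l = [x] := by
  match l with
  | [] => simp at hx
  | [a] => simp at hx; simp [hx]
  | a :: b :: t =>
    exfalso
    have := h2 a (by simp) b (by simp)
    simp [this] at h

lemma even_list_sum {l : List ℕ} (h : ∀ x ∈ l, Even x) : Even l.sum := by
  induction l with
  | nil => simp
  | cons a t ih =>
    simp only [List.sum_cons]
    exact (h a (by simp)).add (ih fun x hx => h x (by simp [hx]))

lemma flat_count (g : ℕ → ℕ) (l : List ℕ) (v : ℕ) :
    ((l.map fun p => replicate p (g p)).flatten.count v)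
      = (l.filter (fun p => decide (g p = v))).sum := by
  induction l with
  | nil => simp
  | cons a t ih =>
    simp only [List.map_cons, List.flatten_cons, List.count_append, ih, List.filter_cons]
    rcases eq_or_ne (g a) v with h | h
    · simp [h, List.count_replicate]
    · simp [h, List.count_replicate, Ne.symm h]

lemma mem_flat_repl {g : ℕ → ℕ} {l : List ℕ} {v : ℕ}
    (hv : v ∈ (l.map fun p => replicate p (g p)).flatten) :
    ∃ p ∈ l, p ≠ 0 ∧ g p = v := by
  simp only [List.mem_flatten, List.mem_map] at hv
  obtain ⟨row, ⟨p, hp, rfl⟩, hvr⟩ := hv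
  rw [List.mem_replicate] at hvr
  exact ⟨p, hp, hvr.1, hvr.2.symm⟩

noncomputable def lab (l : List ℕ) (p : ℕ) : ℕ :=
  if Even p then 1 + (l.filter (fun x => decide (Even x))).idxOf p
  else 1 + (l.filter (fun x => decide (Odd x))).idxOf p

lemma lab_even {l : List ℕ} {p : ℕ} (h : Even p) :
    lab l p = 1 + (l.filter (fun x => decide (Even x))).idxOf p := by simp [lab, h]

lemma lab_odd {l : List ℕ} {p : ℕ} (h : Odd p) :
    lab l p = 1 + (l.filter (fun x => decide (Odd x))).idxOf p := by
  simp [lab, Nat.not_even_iff_odd.mpr h]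

lemma lab_inj_even {l : List ℕ} {p q : ℕ} (hp : p ∈ l) (hq : q ∈ l)
    (hep : Even p) (heq : Even q) (h : lab l p = lab l q) : p = q := by
  rw [lab_even hep, lab_even heq] at h
  have hp' : p ∈ l.filter (fun x => decide (Even x)) := by
    rw [mem_filter]; exact ⟨hp, by simpa using hep⟩
  have hq' : q ∈ l.filter (fun x => decide (Even x)) := by
    rw [mem_filter]; exact ⟨hq, by simpa using heq⟩
  exact (idxOf_inj hp').mp (by omega)

lemma lab_inj_odd {l : List ℕ} {p q : ℕ} (hp : p ∈ l) (hq : q ∈ l)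
    (hop : Odd p) (hoq : Odd q) (h : lab l p = lab l q) : p = q := by
  rw [lab_odd hop, lab_odd hoq] at h
  have hp' : p ∈ l.filter (fun x => decide (Odd x)) := by
    rw [mem_filter]; exact ⟨hp, by simpa using hop⟩
  have hq' : q ∈ l.filter (fun x => decide (Odd x)) := by
    rw [mem_filter]; exact ⟨hq, by simpa using hoq⟩
  exact (idxOf_inj hp').mp (by omega)

lemma lab_partner {l : List ℕ} (hnd : l.Nodup)
    (hoe : l.countP (fun x => decide (Even x)) ≤ l.countP (fun x => decide (Odd x)))
    {p : ℕ} (hp : p ∈ l) (hep : Even p) :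
    ∃ q ∈ l, Odd q ∧ lab l q = lab l p := by
  set evs := l.filter (fun x => decide (Even x)) with hevs
  set ods := l.filter (fun x => decide (Odd x)) with hods
  have hp' : p ∈ evs := by rw [hevs, mem_filter]; exact ⟨hp, by simpa using hep⟩
  have hidx : evs.idxOf p < evs.length := idxOf_lt_length_iff.mpr hp'
  have hlen : evs.length ≤ ods.length := by
    rw [hevs, hods, ← countP_eq_length_filter, ← countP_eq_length_filter]; exact hoe
  have hidx2 : evs.idxOf p < ods.length := lt_of_lt_of_le hidx hlen
  refine ⟨ods[evs.idxOf p], ?_, ?_, ?_⟩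
  · exact (mem_filter.mp (getElem_mem hidx2)).1
  · have := (mem_filter.mp (getElem_mem hidx2)).2; simpa using this
  · have hq : Odd ods[evs.idxOf p] := by
      have := (mem_filter.mp (getElem_mem hidx2)).2; simpa using this
    rw [lab_odd hq, lab_even hep]
    rw [Nodup.idxOf_getElem (hnd.filter _)]

lemma lab_pos (l : List ℕ) (p : ℕ) : 0 < lab l p := by
  unfold lab; split <;> omega


lemma const_prefix (t : List ℕ) (v : ℕ) (hp : (v::t).Pairwise (· ≤ ·)) :
    (v::t).take ((v::t).count v) = replicate ((v::t).count v) v ∧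
     ∀ x ∈ (v::t).drop ((v::t).count v), v < x := by
  induction t with
  | nil => simp
  | cons w t' ih =>
    have hvw : v ≤ w := (pairwise_cons.mp hp).1 w (by simp)
    have hp' : (w :: t').Pairwise (· ≤ ·) := (pairwise_cons.mp hp).2
    rcases eq_or_ne w v with rfl | hne
    · have hpw : (w :: t').Pairwise (· ≤ ·) := hp'
      obtain ⟨ih1, ih2⟩ := ih hpw
      have hc : (w :: w :: t').count w = (w :: t').count w + 1 := by
        rw [count_cons_self]
      refine ⟨?_, ?_⟩
      · rw [hc, take_succ_cons, ih1, replicate_succ]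
      · rw [hc, drop_succ_cons]
        exact ih2
    · have hvltw : v < w := lt_of_le_of_ne hvw (Ne.symm hne)
      have hvnot : v ∉ w :: t' := by
        intro hmem
        rcases mem_cons.mp hmem with rfl | hmem'
        · exact hne rfl
        · have := (pairwise_cons.mp hp').1 v hmem'
          omega
      have hc : (v :: w :: t').count v = 1 := by
        rw [count_cons_self, count_eq_zero_of_not_mem hvnot]
      refine ⟨by rw [hc]; simp, ?_⟩
      rw [hc]
      intro x hx
      simp only [drop_one, tail_cons] at hx
      rcases mem_cons.mp hx with rfl | hmem'
      · exact hvltw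
      · have := (pairwise_cons.mp hp').1 x hmem'
        omega

lemma count_full (row : List ℕ) (v : ℕ) (hch : row.Chain' (· ≤ ·))
    (hh : row.head? = some v) (hnb : ¬ HasEvenBoundary row)
    (hev : Even (row.count v)) : row.count v = row.length := by
  by_contra hne
  have hle : row.count v ≤ row.length := count_le_length (a := v) (l := row)
  have hlt : row.count v < row.length := lt_of_le_of_ne hle hne
  have hvmem : v ∈ row := by
    cases row with
    | nil => simp at hh
    | cons a t => simp only [head?_cons, Option.some.injEq] at hh; simp [hh]
  have hpos : 0 < row.count v := count_pos_iff.mpr hvmem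
  obtain ⟨t, rfl⟩ : ∃ t, row = v :: t := by
    cases row with
    | nil => simp at hh
    | cons a t =>
      simp only [head?_cons, Option.some.injEq] at hh
      exact ⟨t, by rw [hh]⟩
  obtain ⟨h1, h2⟩ := const_prefix t v (isChain_iff_pairwise.mp hch)
  apply hnb
  set k := (v :: t).count v with hk
  refine ⟨k, hpos, hev, hlt, ?_⟩
  intro c hc
  rw [h1] at hc
  have hcv : c = v := eq_of_mem_replicate hc
  have hgd : (v :: t).getD k 0 = (v :: t)[k]'hlt := getD_eq_getElem _ _ hlt
  have hdl : 0 < ((v :: t).drop k).length := by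
    rw [length_drop]; omega
  have hmem2 : (v :: t)[k]'hlt ∈ (v :: t).drop k := by
    have := List.getElem_drop (xs := v :: t) (i := k) (j := 0) (h := by simpa using hdl)
    simp only [Nat.add_zero] at this
    rw [← this]
    exact getElem_mem _
  have := h2 _ hmem2
  omega

lemma two_le_length_of_mem {α : Type*} {a b : α} {L : List α} [DecidableEq α]
    (hab : a ≠ b) (ha : a ∈ L) (hb : b ∈ L) : 2 ≤ L.length := by
  have h1 : ({a, b} : Finset α) ⊆ L.toFinset := by
    intro x hx
    rw [Finset.mem_insert, Finset.mem_singleton] at hx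
    rcases hx with rfl | rfl <;> simpa [List.mem_toFinset]
  have h2 : ({a, b} : Finset α).card = 2 := Finset.card_pair hab
  calc 2 = ({a, b} : Finset α).card := h2.symm
    _ ≤ L.toFinset.card := Finset.card_le_card h1
    _ ≤ L.length := L.toFinset_card_le

lemma sum_map_filter_zero {α : Type*} (f : α → ℕ) (p : α → Bool) (L : List α)
    (h : ∀ x ∈ L, ¬ p x → f x = 0) :
    (L.map f).sum = ((L.filter p).map f).sum := by
  induction L with
  | nil => simp
  | cons a t ih =>
    have ih' := ih (fun x hx => h x (by simp [hx]))
    by_cases hp : p a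
    · rw [filter_cons, if_pos hp]
      simp [ih']
    · rw [filter_cons, if_neg (by simpa using hp)]
      simp only [map_cons, sum_cons, ih']
      rw [h a (by simp) (by simpa using hp)]
      omega

lemma pair_of_countP_two {T : List (List ℕ)} (hnd : T.Nodup) {v : ℕ}
    (h2 : T.countP (fun row => decide (v ∈ row)) = 2) :
    ∃ r₁ r₂, r₁ ∈ T ∧ r₂ ∈ T ∧ r₁ ≠ r₂ ∧ v ∈ r₁ ∧ v ∈ r₂ ∧
      (∀ r ∈ T, v ∈ r → r = r₁ ∨ r = r₂) ∧
      T.flatten.count v = r₁.count v + r₂.count v := by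
  rw [countP_eq_length_filter] at h2
  obtain ⟨r₁, r₂, hf⟩ := List.length_eq_two.mp h2
  have hfn : (T.filter (fun row => decide (v ∈ row))).Nodup := hnd.filter _
  have hne : r₁ ≠ r₂ := by
    rw [hf] at hfn; simpa using fun h => (by simp [h] at hfn)
  have hr₁ : r₁ ∈ T ∧ v ∈ r₁ := by
    have : r₁ ∈ T.filter (fun row => decide (v ∈ row)) := by rw [hf]; simp
    rw [mem_filter] at this; exact ⟨this.1, by simpa using this.2⟩
  have hr₂ : r₂ ∈ T ∧ v ∈ r₂ := by
    have : r₂ ∈ T.filter (fun row => decide (v ∈ row)) := by rw [hf]; simp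
    rw [mem_filter] at this; exact ⟨this.1, by simpa using this.2⟩
  refine ⟨r₁, r₂, hr₁.1, hr₂.1, hne, hr₁.2, hr₂.2, ?_, ?_⟩
  · intro r hr hvr
    have : r ∈ T.filter (fun row => decide (v ∈ row)) := by
      rw [mem_filter]; exact ⟨hr, by simpa using hvr⟩
    rw [hf] at this
    simpa using this
  · rw [count_flatten]
    rw [sum_map_filter_zero (count v) (fun row => decide (v ∈ row)) T
      (by intro x hx hnp; rw [count_eq_zero]; simpa using hnp)]
    rw [hf]
    simp
noncomputable def mkT (l : List ℕ) : List (List ℕ) :=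
  l.map (fun p => replicate p (lab l p))

lemma sub_zero_sublist (P : ℕ → Bool) (l : List ℕ) :
    ((l.map fun p => if P p then p else 0).filter (fun k => decide (k ≠ 0))).Sublist l := by
  induction l with
  | nil => simp
  | cons a t ih =>
    simp only [map_cons, filter_cons]
    rcases eq_or_ne a 0 with rfl | ha
    · have h0 : (if P 0 then 0 else 0) = 0 := by split <;> rfl
      rw [h0]
      simpa using ih.cons 0
    · by_cases h : P a
      · simpa [h, ha] using ih.cons₂ a
      · simpa [h] using ih.cons a

lemma labelsA_facts {l : List ℕ} (hnd : l.Nodup)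
    (hoe : l.countP (fun x => decide (Even x)) ≤ l.countP (fun x => decide (Odd x)))
    {v : ℕ} {p₀ : ℕ} (hp₀ : p₀ ∈ l) (hv : lab l p₀ = v) :
    Odd ((l.filter (fun p => decide (lab l p = v))).sum) ∧
    (l.filter (fun p => decide (lab l p = v))).length ≤ 2 := by
  set A := l.filter (fun p => decide (lab l p = v)) with hA
  have hAnd : A.Nodup := hnd.filter _
  have hmemA : ∀ x ∈ A, x ∈ l ∧ lab l x = v := by
    intro x hx; rw [hA, mem_filter] at hx; exact ⟨hx.1, by simpa using hx.2⟩
  have hAE : True := trivial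
  set AE := A.filter (fun x => decide (Even x)) with hAEdef
  set AO := A.filter (fun x => !decide (Even x)) with hAOdef
  have hperm : AE ++ AO ~ A := List.filter_append_perm (fun x => decide (Even x)) A
  have hsum : AE.sum + AO.sum = A.sum := by
    have := hperm.sum_eq; rwa [List.sum_append] at this
  have hlen : AE.length + AO.length = A.length := by
    have := hperm.length_eq; rwa [List.length_append] at this
  have hAOodd : ∀ x ∈ AO, Odd x := by
    intro x hx
    have hx' : x ∈ A.filter (fun x => !decide (Even x)) := hx
    rw [mem_filter] at hx'
    simpa [Nat.not_even_iff_odd] using hx'.2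
  have hAE1 : AE.length ≤ 1 := by
    apply length_le_one_of_nodup (hAnd.filter _)
    intro a ha b hb
    have ha' : a ∈ A.filter (fun x => decide (Even x)) := ha
    have hb' : b ∈ A.filter (fun x => decide (Even x)) := hb
    rw [mem_filter] at ha' hb'
    obtain ⟨ha1, ha2⟩ := hmemA a ha'.1
    obtain ⟨hb1, hb2⟩ := hmemA b hb'.1
    exact lab_inj_even ha1 hb1 (by simpa using ha'.2) (by simpa using hb'.2) (ha2.trans hb2.symm)
  have hAOall : ∀ a ∈ AO, ∀ b ∈ AO, a = b := by
    intro a ha b hb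
    have hoa := hAOodd a ha
    have hob := hAOodd b hb
    have ha' : a ∈ A.filter (fun x => !decide (Even x)) := ha
    have hb' : b ∈ A.filter (fun x => !decide (Even x)) := hb
    rw [mem_filter] at ha' hb'
    obtain ⟨ha1, ha2⟩ := hmemA a ha'.1
    obtain ⟨hb1, hb2⟩ := hmemA b hb'.1
    exact lab_inj_odd ha1 hb1 hoa hob (ha2.trans hb2.symm)
  have hAO1 : AO.length ≤ 1 := length_le_one_of_nodup (hAnd.filter _) hAOall
  -- AO nonempty
  have hAOne : AO ≠ [] := by
    rcases Nat.even_or_odd p₀ with hep | hop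
    · obtain ⟨q, hq, hoq, hlabq⟩ := lab_partner hnd hoe hp₀ hep
      have hqA : q ∈ A := by
        rw [hA, mem_filter]; exact ⟨hq, by simp [hlabq, hv]⟩
      intro hE
      have : q ∈ AO := by
        show q ∈ A.filter (fun x => !decide (Even x))
        rw [mem_filter]; exact ⟨hqA, by simp [Nat.not_even_iff_odd.mpr hoq]⟩
      simp [hE] at this
    · intro hE
      have hp₀A : p₀ ∈ A := by rw [hA, mem_filter]; simp [hp₀, hv]
      have : p₀ ∈ AO := by
        show p₀ ∈ A.filter (fun x => !decide (Even x))
        rw [mem_filter]; exact ⟨hp₀A, by simp [Nat.not_even_iff_odd.mpr hop]⟩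
      simp [hE] at this
  obtain ⟨q, hq⟩ := List.exists_mem_of_ne_nil _ hAOne
  have hAOsing : AO = [q] := eq_singleton_of (hAnd.filter _) hAOall hq
  constructor
  · have : Odd AO.sum := by rw [hAOsing]; simpa using hAOodd q hq
    have hAEeven : Even AE.sum := by
      apply even_list_sum; intro x hx
      have hx' : x ∈ A.filter (fun x => decide (Even x)) := hx
      rw [mem_filter] at hx'; simpa using hx'.2
    rw [← hsum]
    rcases hAEeven with ⟨k, hk⟩
    rcases this with ⟨m, hm⟩
    exact ⟨k + m, by omega⟩
  · omega

lemma mkT_isBarTableau {l : List ℕ} (hnd : l.Nodup) (hpos : ∀ x ∈ l, 0 < x)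
    (hoe : l.countP (fun x => decide (Even x)) ≤ l.countP (fun x => decide (Odd x))) :
    IsBarTableau l (mkT l) := by
  have hmemT : ∀ row ∈ mkT l, ∃ p ∈ l, row = replicate p (lab l p) := by
    intro row hrow
    rw [mkT, mem_map] at hrow
    obtain ⟨p, hp, rfl⟩ := hrow
    exact ⟨p, hp, rfl⟩
  refine ⟨?_, ?_, ?_, ?_, ?_, ?_, ?_⟩
  · rw [mkT, map_map]; simp [Function.comp_def]
  · intro row hrow x hx
    obtain ⟨p, hp, rfl⟩ := hmemT row hrow
    rw [mem_replicate] at hx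
    rw [hx.2]; exact lab_pos l p
  · intro row hrow
    obtain ⟨p, hp, rfl⟩ := hmemT row hrow
    exact List.Pairwise.isChain (by rw [pairwise_replicate]; right; exact le_refl _)
  · intro v hv
    rw [mkT] at hv ⊢
    obtain ⟨p₀, hp₀, hpne, hlab⟩ := mem_flat_repl hv
    rw [flat_count]
    exact (labelsA_facts hnd hoe hp₀ hlab).1
  · intro v
    rw [mkT, countP_map]
    rcases (em (∃ p ∈ l, lab l p = v)) with ⟨p₀, hp₀, hv⟩ | hno
    · have h2 := (labelsA_facts hnd hoe hp₀ hv).2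
      rw [← countP_eq_length_filter] at h2
      refine le_trans (le_of_eq (countP_congr ?_)) h2
      intro x hx
      simp only [Function.comp_apply, decide_eq_true_eq, mem_replicate]
      constructor
      · rintro ⟨_, h⟩; exact h.symm
      · intro h; exact ⟨by have := hpos x hx; omega, h.symm⟩
    · have : ∀ x ∈ l, ¬ (v ∈ replicate x (lab l x)) := by
        intro x hx hmem
        rw [mem_replicate] at hmem
        exact hno ⟨x, hx, hmem.2.symm⟩
      calc l.countP (fun x => decide (v ∈ replicate x (lab l x)))
          = 0 := by
            rw [countP_eq_length_filter, length_eq_zero_iff, filter_eq_nil_iff]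
            intro a ha; simpa using this a ha
        _ ≤ 2 := by omega
  · intro v _ row hrow hvrow
    obtain ⟨p, hp, rfl⟩ := hmemT row hrow
    rw [mem_replicate] at hvrow
    rw [head?_replicate, if_neg hvrow.1, hvrow.2]
  · intro i
    rw [mkT]
    simp only [map_map]
    have heq : l.map (List.length ∘ (fun row => row.filter (fun x => decide (x ≤ i)))
          ∘ fun p => replicate p (lab l p))
        = l.map (fun p => if decide (lab l p ≤ i) then p else 0) := by
      apply List.map_congr_left
      intro p _
      simp only [Function.comp_apply, filter_replicate]
      by_cases h : lab l p ≤ i <;> simp [h]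
    rw [heq]
    exact (sub_zero_sublist _ l).nodup hnd

lemma mkT_numBars_le {l : List ℕ} (hnd : l.Nodup)
    (hoe : l.countP (fun x => decide (Even x)) ≤ l.countP (fun x => decide (Odd x))) :
    numBars (mkT l) ≤ l.countP (fun x => decide (Odd x)) := by
  rw [numBars, ← List.card_toFinset]
  set o := l.countP (fun x => decide (Odd x)) with ho
  have hsub : (mkT l).flatten.toFinset ⊆ Finset.Icc 1 o := by
    intro v hv
    rw [List.mem_toFinset] at hv
    rw [mkT] at hv
    obtain ⟨p, hp, _, hlab⟩ := mem_flat_repl hv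
    rw [Finset.mem_Icc]
    constructor
    · have := lab_pos l p; omega
    · rw [← hlab]
      unfold lab
      split <;> rename_i h
      · have hmem : p ∈ l.filter (fun x => decide (Even x)) := by
          rw [mem_filter]; exact ⟨hp, by simpa using h⟩
        have h1 : (l.filter (fun x => decide (Even x))).idxOf p < l.countP (fun x => decide (Even x)) := by
          rw [countP_eq_length_filter]; exact idxOf_lt_length_iff.mpr hmem
        omega
      · have hop : Odd p := Nat.not_even_iff_odd.mp h
        have hmem : p ∈ l.filter (fun x => decide (Odd x)) := by
          rw [mem_filter]; exact ⟨hp, by simpa using hop⟩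
        have h1 : (l.filter (fun x => decide (Odd x))).idxOf p < o := by
          rw [ho, countP_eq_length_filter]; exact idxOf_lt_length_iff.mpr hmem
        omega
  calc (mkT l).flatten.toFinset.card ≤ (Finset.Icc 1 o).card := Finset.card_le_card hsub
    _ = o := by rw [Nat.card_Icc]; omega

end Aux



lemma exists_even_full_row {T : List (List ℕ)} (hnd : T.Nodup)
    (hch : ∀ row ∈ T, row.Chain' (· ≤ ·))
    (hoddT : ∀ v ∈ T.flatten, Odd (T.flatten.count v))
    (hhead : ∀ v : ℕ, T.countP (fun row => decide (v ∈ row)) = 2 →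
      ∀ row ∈ T, v ∈ row → row.head? = some v)
    (hb : ∀ row ∈ T, ¬ HasEvenBoundary row)
    {v : ℕ} (h2 : T.countP (fun row => decide (v ∈ row)) = 2) :
    ∃ r ∈ T, v ∈ r ∧ (∀ x ∈ r, x = v) ∧ Even r.length := by
  obtain ⟨r₁, r₂, hr₁, hr₂, hne, hv₁, hv₂, _, hcount⟩ := pair_of_countP_two hnd h2
  have hflat : v ∈ T.flatten := mem_flatten.mpr ⟨r₁, hr₁, hv₁⟩
  have hodd : Odd (r₁.count v + r₂.count v) := hcount ▸ hoddT v hflat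
  have key : ∀ r ∈ T, v ∈ r → Even (r.count v) → ∃ r' ∈ T, v ∈ r' ∧ (∀ x ∈ r', x = v) ∧ Even r'.length := by
    intro r hr hvr hev
    have hfull : r.count v = r.length :=
      count_full r v (hch r hr) (hhead v h2 r hr hvr) (hb r hr) hev
    refine ⟨r, hr, hvr, fun x hx => (count_eq_length.mp hfull x hx).symm, hfull ▸ hev⟩
  rcases Nat.even_or_odd (r₁.count v) with he | ho
  · exact key r₁ hr₁ hv₁ he
  · have he₂ : Even (r₂.count v) := by
      rw [Nat.even_iff]
      rw [Nat.odd_iff] at hodd ho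
      omega
    exact key r₂ hr₂ hv₂ he₂



/-- Suppose `λ` has at least as many odd parts `o` as even parts `e`, and `T` is a minimal
bar tableau of shape `λ` with no even bar boundaries.  Then: (a) every bar of type 3 (a
label occurring in two rows) consists of an entire even row together with an entire odd
row; (b) there are exactly `e` bars of type 3; (c) every odd row not in a type-3 bar is
filled entirely by a single label occurring in no other row; and (d) `T` has exactly `o`
bars. -/
theorem minimal_structure_of_odd_ge_even (n : ℕ) (l : List ℕ) (T : List (List ℕ))
    (hl : IsStrictPartition n l)
    (hoe : l.countP (fun x => decide (Even x)) ≤ l.countP (fun x => decide (Odd x)))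
    (hT : IsBarTableau l T)
    (hmin : ∀ T' : List (List ℕ), IsBarTableau l T' → numBars T ≤ numBars T')
    (hb : ∀ row ∈ T, ¬ HasEvenBoundary row) :
    (∀ v : ℕ, T.countP (fun row => decide (v ∈ row)) = 2 →
      ∃ r₁ ∈ T, ∃ r₂ ∈ T, r₁ ≠ r₂ ∧ v ∈ r₁ ∧ v ∈ r₂ ∧
        (∀ x ∈ r₁, x = v) ∧ (∀ x ∈ r₂, x = v) ∧
        Even r₁.length ∧ Odd r₂.length) ∧
    (T.flatten.dedup.countP
        (fun v => decide (T.countP (fun row => decide (v ∈ row)) = 2))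
      = l.countP (fun x => decide (Even x))) ∧
    (∀ row ∈ T, Odd row.length →
      ¬ (∃ v ∈ row, T.countP (fun r => decide (v ∈ r)) = 2) →
      ∃ v : ℕ, (∀ x ∈ row, x = v) ∧ ∀ row' ∈ T, v ∈ row' → row' = row) ∧
    numBars T = l.countP (fun x => decide (Odd x)) := by
  classical
  obtain ⟨hsort, hposl, -⟩ := hl
  obtain ⟨hlen, hposT, hch, hoddT, hle2, hhead, -⟩ := hT
  set e := l.countP (fun x => decide (Even x)) with he
  set o := l.countP (fun x => decide (Odd x)) with ho
  have hndl : l.Nodup := hsort.nodup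
  have hndT : T.Nodup := by
    have h1 : (T.map List.length).Nodup := by rw [hlen]; exact hndl
    exact h1.of_map
  have hrownil : ∀ row ∈ T, row ≠ [] := by
    intro row hrow hnil
    have h1 : row.length ∈ l := by
      rw [← hlen]; exact mem_map_of_mem hrow
    have := hposl _ h1
    rw [hnil] at this
    simp at this
  have hevenfull : ∀ v : ℕ, T.countP (fun row => decide (v ∈ row)) = 2 →
      ∃ r ∈ T, v ∈ r ∧ (∀ x ∈ r, x = v) ∧ Even r.length :=
    fun v h2 => exists_even_full_row hndT hch hoddT hhead hb h2
  set S := T.flatten.toFinset with hS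
  set R := T.toFinset with hR
  set cnt := fun v : ℕ => T.countP (fun row => decide (v ∈ row)) with hcnt
  have hRcard : R.card = T.length := List.toFinset_card_of_nodup hndT
  have hTlen : T.length = l.length := by rw [← hlen, length_map]
  have hloe : l.length = e + o := by
    have h1 := List.length_eq_countP_add_countP (fun x => decide (Even x)) (l := l)
    have h2 : l.countP (fun a => decide ¬(decide (Even a) = true)) = o := by
      rw [ho]
      apply countP_congr
      intro x _
      simp [Nat.not_even_iff_odd]
    omega
  have hmemS : ∀ v, v ∈ S ↔ ∃ r ∈ T, v ∈ r := by
    intro v; rw [hS, List.mem_toFinset, mem_flatten]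
  have hcnt_card : ∀ v, cnt v = (R.filter (fun r => v ∈ r)).card := by
    intro v
    show T.countP (fun row => decide (v ∈ row)) = _
    rw [countP_eq_length_filter, ← List.toFinset_card_of_nodup (hndT.filter _),
      List.toFinset_filter]
    congr 1
    apply Finset.filter_congr
    intro r _
    simp
  -- double counting
  have key : ∑ v ∈ S, cnt v = ∑ r ∈ R, r.toFinset.card := by
    have h1 : ∀ v, cnt v = ∑ r ∈ R, if v ∈ r then 1 else 0 := by
      intro v; rw [hcnt_card v, Finset.card_filter]
    calc ∑ v ∈ S, cnt v = ∑ v ∈ S, ∑ r ∈ R, if v ∈ r then 1 else 0 :=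
          Finset.sum_congr rfl fun v _ => h1 v
      _ = ∑ r ∈ R, ∑ v ∈ S, if v ∈ r then 1 else 0 := Finset.sum_comm
      _ = ∑ r ∈ R, r.toFinset.card := by
          apply Finset.sum_congr rfl
          intro r hr
          rw [← Finset.card_filter]
          congr 1
          ext v
          simp only [Finset.mem_filter, List.mem_toFinset]
          constructor
          · exact fun h => h.2
          · intro h
            refine ⟨?_, h⟩
            rw [hmemS]
            exact ⟨r, by rwa [hR, List.mem_toFinset] at hr, h⟩
  have hcnt_ge : ∀ v ∈ S, 1 ≤ cnt v := by
    intro v hv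
    rw [hmemS] at hv
    obtain ⟨r, hr, hvr⟩ := hv
    rw [hcnt]
    exact countP_pos_iff.mpr ⟨r, hr, by simpa using hvr⟩
  have hcnt_le : ∀ v, cnt v ≤ 2 := hle2
  set t3 := (S.filter (fun v => cnt v = 2)).card with ht3
  have hsum2 : ∑ v ∈ S, cnt v = S.card + t3 := by
    have hpt : ∀ v ∈ S, cnt v = 1 + if cnt v = 2 then 1 else 0 := by
      intro v hv
      have := hcnt_ge v hv
      have := hcnt_le v
      by_cases h : cnt v = 2
      · simp [h]
      · have : cnt v = 1 := by omega
        simp [h, this]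
    rw [Finset.sum_congr rfl hpt, Finset.sum_add_distrib]
    congr 1
    · simp
    · rw [ht3, Finset.card_filter]
  -- t3 ≤ e
  have hcardEv : (R.filter (fun r => Even r.length)).card = e := by
    have h1 : (T.filter (fun r => decide (Even r.length))).toFinset
        = R.filter (fun r => Even r.length) := by
      rw [List.toFinset_filter]
      apply Finset.filter_congr
      intro r _
      simp
    rw [← h1, List.toFinset_card_of_nodup (hndT.filter _), ← countP_eq_length_filter]
    have h2 : T.countP (fun r => decide (Even r.length))
        = (T.map List.length).countP (fun k => decide (Even k)) := by
      rw [countP_map]; rfl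
    rw [h2, hlen, he]
  have ht3e : t3 ≤ e := by
    rw [ht3, ← hcardEv]
    set f := fun v : ℕ => if h : cnt v = 2 then (hevenfull v h).choose else [] with hf
    apply Finset.card_le_card_of_injOn f
    · intro v hv
      rw [Finset.mem_coe, Finset.mem_filter] at hv
      obtain ⟨hvS, hv2⟩ := hv
      rw [hf]
      simp only [hv2, dif_pos]
      obtain ⟨hrT, _, _, hev⟩ := (hevenfull v hv2).choose_spec
      rw [Finset.mem_coe, Finset.mem_filter]
      exact ⟨by rwa [hR, List.mem_toFinset], hev⟩
    · intro v hv w hw hvw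
      simp only [Finset.coe_filter, Set.mem_setOf_eq] at hv hw
      obtain ⟨hvS, hv2⟩ := hv
      obtain ⟨hwS, hw2⟩ := hw
      rw [hf] at hvw
      simp only [hv2, hw2, dif_pos] at hvw
      obtain ⟨_, hvmem, hvall, _⟩ := (hevenfull v hv2).choose_spec
      obtain ⟨_, hwmem, hwall, _⟩ := (hevenfull w hw2).choose_spec
      have := hvall v hvmem
      rw [hvw] at hvmem
      have h2 := hwall v hvmem
      omega
  -- upper bound via construction
  have hnum : numBars T = S.card := by
    rw [numBars, hS, List.card_toFinset]
  have hub : S.card ≤ o := by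
    rw [← hnum]
    calc numBars T ≤ numBars (mkT l) := hmin (mkT l) (mkT_isBarTableau hndl hposl hoe)
      _ ≤ o := mkT_numBars_le hndl hoe
  -- lower bound
  have hlow : R.card ≤ ∑ r ∈ R, r.toFinset.card := by
    rw [Finset.card_eq_sum_ones R]
    apply Finset.sum_le_sum
    intro r hr
    rw [hR, List.mem_toFinset] at hr
    have := hrownil r hr
    rw [Nat.one_le_iff_ne_zero, ← Nat.pos_iff_ne_zero, Finset.card_pos]
    obtain ⟨x, hx⟩ := List.exists_mem_of_ne_nil r this
    exact ⟨x, List.mem_toFinset.mpr hx⟩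
  have hmain : S.card + t3 = e + o ∧ S.card = o ∧ t3 = e := by
    have h1 : e + o ≤ S.card + t3 := by
      calc e + o = l.length := hloe.symm
        _ = T.length := hTlen.symm
        _ = R.card := hRcard.symm
        _ ≤ ∑ r ∈ R, r.toFinset.card := hlow
        _ = ∑ v ∈ S, cnt v := key.symm
        _ = S.card + t3 := hsum2
    refine ⟨by omega, by omega, by omega⟩
  obtain ⟨hEq, hScard, ht3eq⟩ := hmain
  -- every row constant
  have hsumEq : ∑ r ∈ R, r.toFinset.card = R.card := by
    have : ∑ r ∈ R, r.toFinset.card = S.card + t3 := by rw [← key]; exact hsum2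
    rw [this, hScard, ht3eq, hRcard, hTlen, hloe]
    omega
  have hone : ∀ r ∈ R, r.toFinset.card = 1 := by
    by_contra hcon
    push_neg at hcon
    obtain ⟨r₀, hr₀, hne1⟩ := hcon
    have hge : ∀ r ∈ R, 1 ≤ r.toFinset.card := by
      intro r hr
      rw [hR, List.mem_toFinset] at hr
      have := hrownil r hr
      rw [Nat.one_le_iff_ne_zero, ← Nat.pos_iff_ne_zero, Finset.card_pos]
      obtain ⟨x, hx⟩ := List.exists_mem_of_ne_nil r this
      exact ⟨x, List.mem_toFinset.mpr hx⟩
    have hstrict : ∑ r ∈ R, (1 : ℕ) < ∑ r ∈ R, r.toFinset.card := by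
      apply Finset.sum_lt_sum hge
      exact ⟨r₀, hr₀, by have := hge r₀ hr₀; omega⟩
    rw [hsumEq] at hstrict
    simp at hstrict
  have hconst : ∀ r ∈ T, ∃ c, (∀ x ∈ r, x = c) ∧ c ∈ r := by
    intro r hr
    have h1 := hone r (by rw [hR, List.mem_toFinset]; exact hr)
    obtain ⟨c, hc⟩ := Finset.card_eq_one.mp h1
    refine ⟨c, ?_, ?_⟩
    · intro x hx
      have : x ∈ r.toFinset := List.mem_toFinset.mpr hx
      rw [hc] at this
      simpa using this
    · have : c ∈ r.toFinset := by rw [hc]; simp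
      simpa using this
  -- conclusions
  refine ⟨?_, ?_, ?_, ?_⟩
  · -- (a)
    intro v h2
    obtain ⟨r₁, r₂, hr₁, hr₂, hne, hv₁, hv₂, -, hcount⟩ := pair_of_countP_two hndT h2
    obtain ⟨c₁, hc₁, -⟩ := hconst r₁ hr₁
    obtain ⟨c₂, hc₂, -⟩ := hconst r₂ hr₂
    have hall₁ : ∀ x ∈ r₁, x = v := by
      intro x hx; rw [hc₁ x hx, ← hc₁ v hv₁]
    have hall₂ : ∀ x ∈ r₂, x = v := by
      intro x hx; rw [hc₂ x hx, ← hc₂ v hv₂]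
    have hcnt₁ : r₁.count v = r₁.length := count_eq_length.mpr fun b hb => (hall₁ b hb).symm
    have hcnt₂ : r₂.count v = r₂.length := count_eq_length.mpr fun b hb => (hall₂ b hb).symm
    have hoddsum : Odd (r₁.length + r₂.length) := by
      rw [← hcnt₁, ← hcnt₂, ← hcount]
      exact hoddT v (mem_flatten.mpr ⟨r₁, hr₁, hv₁⟩)
    rcases Nat.even_or_odd r₁.length with hev | hod
    · refine ⟨r₁, hr₁, r₂, hr₂, hne, hv₁, hv₂, hall₁, hall₂, hev, ?_⟩
      rw [Nat.odd_iff] at hoddsum ⊢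
      rw [Nat.even_iff] at hev
      omega
    · have hev₂ : Even r₂.length := by
        rw [Nat.odd_iff] at hoddsum hod
        rw [Nat.even_iff]
        omega
      exact ⟨r₂, hr₂, r₁, hr₁, hne.symm, hv₂, hv₁, hall₂, hall₁, hev₂, hod⟩
  · -- (b)
    have h1 : (T.flatten.dedup.filter
        (fun v => decide (T.countP (fun row => decide (v ∈ row)) = 2))).toFinset
        = S.filter (fun v => cnt v = 2) := by
      rw [List.toFinset_filter]
      have hdtf : T.flatten.dedup.toFinset = S := by
        rw [hS]; ext v; simp [List.mem_dedup]
      rw [hdtf]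
      apply Finset.filter_congr
      intro v _
      simp [hcnt]
    rw [countP_eq_length_filter,
      ← List.toFinset_card_of_nodup ((List.nodup_dedup _).filter _), h1, ← ht3, ht3eq]
  · -- (c)
    intro row hrow hoddlen hno
    obtain ⟨c, hc, hcmem⟩ := hconst row hrow
    refine ⟨c, hc, ?_⟩
    intro row' hrow' hcrow'
    by_contra hne
    have h2le : 2 ≤ T.countP (fun r => decide (c ∈ r)) := by
      rw [countP_eq_length_filter]
      apply two_le_length_of_mem (a := row) (b := row') (Ne.symm hne)
      · rw [mem_filter]; exact ⟨hrow, by simpa using hcmem⟩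
      · rw [mem_filter]; exact ⟨hrow', by simpa using hcrow'⟩
    have hle : T.countP (fun r => decide (c ∈ r)) ≤ 2 := hle2 c
    have : T.countP (fun r => decide (c ∈ r)) = 2 := by omega
    exact hno ⟨c, hcmem, this⟩
  · -- (d)
    rw [hnum, hScard]
end
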